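/- arXiv:1709.09444 — 8 statements merged into one kernel-verified Lean document; each statement's English description precedes it below -/
import Mathlib

section
/- Let κ : (0,∞) → (0,∞) be a nondecreasing function and let (λ_k) be a positive nonincreasing sequence, and let (e_k) be a nonnegative sequence. If there is C > 0 such that for all n ≥ 1, λ_n^4 · ∑_{k=1}^n λ_k^{-2} κ(λ_k²)² e_k ≤ C · ∑_{k=n+1}^∞ λ_k² κ(λ_k²)² e_k (all series assumed convergent), then for the same C and all n ≥ 1, λ_n^4 · ∑_{k=1}^n λ_k^{-2} e_k ≤ C · ∑_{k=n+1}^∞ λ_k² e_k. -/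
open Finset

/-- The κ-weighted Muckenhoupt-type noise condition implies the plain one, for a
nondecreasing positive κ and positive nonincreasing singular values. -/
theorem stmt_1
    (κ : ℝ → ℝ) (hκ_pos : ∀ t > 0, 0 < κ t) (hκ_mono : MonotoneOn κ (Set.Ioi 0))
    (lam : ℕ → ℝ) (hlam_pos : ∀ k, 0 < lam k) (hlam_anti : Antitone lam)
    (e : ℕ → ℝ) (he : ∀ k, 0 ≤ e k)
    (hsumκ : Summable (fun k => (lam k) ^ 2 * κ ((lam k) ^ 2) ^ 2 * e k))
    (hsum : Summable (fun k => (lam k) ^ 2 * e k))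
    (C : ℝ) (hC : 0 < C)
    (h : ∀ n, 1 ≤ n →
      (lam n) ^ 4 * ∑ k ∈ Icc 1 n, ((lam k) ^ 2)⁻¹ * κ ((lam k) ^ 2) ^ 2 * e k
        ≤ C * ∑' k : ℕ, (lam (n + 1 + k)) ^ 2 * κ ((lam (n + 1 + k)) ^ 2) ^ 2 * e (n + 1 + k)) :
    ∀ n, 1 ≤ n →
      (lam n) ^ 4 * ∑ k ∈ Icc 1 n, ((lam k) ^ 2)⁻¹ * e k
        ≤ C * ∑' k : ℕ, (lam (n + 1 + k)) ^ 2 * e (n + 1 + k) := by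
  intro n hn
  have hlamsq : ∀ k, (0:ℝ) < (lam k) ^ 2 := fun k => pow_pos (hlam_pos k) 2
  have hKpos : ∀ k, 0 < κ ((lam k) ^ 2) := fun k => hκ_pos _ (hlamsq k)
  set Kn : ℝ := κ ((lam n) ^ 2) with hKn
  have hKnpos : 0 < Kn := hKpos n
  have hinj : Function.Injective (fun k : ℕ => n + 1 + k) := fun a b hab => by
    simpa using hab
  have hsumκt : Summable (fun k : ℕ =>
      (lam (n + 1 + k)) ^ 2 * κ ((lam (n + 1 + k)) ^ 2) ^ 2 * e (n + 1 + k)) :=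
    hsumκ.comp_injective hinj
  have hsumt : Summable (fun k : ℕ => (lam (n + 1 + k)) ^ 2 * e (n + 1 + k)) :=
    hsum.comp_injective hinj
  -- monotonicity facts
  have hκle : ∀ {a b : ℕ}, a ≤ b → κ ((lam b) ^ 2) ≤ κ ((lam a) ^ 2) := by
    intro a b hab
    exact hκ_mono (hlamsq b) (hlamsq a)
      (pow_le_pow_left₀ (hlam_pos b).le (hlam_anti hab) 2)
  -- step 1
  have h1 : Kn ^ 2 * ∑ k ∈ Icc 1 n, ((lam k) ^ 2)⁻¹ * e k
      ≤ ∑ k ∈ Icc 1 n, ((lam k) ^ 2)⁻¹ * κ ((lam k) ^ 2) ^ 2 * e k := by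
    rw [Finset.mul_sum]
    refine Finset.sum_le_sum fun k hk => ?_
    have hkn : k ≤ n := (Finset.mem_Icc.mp hk).2
    have hκk : Kn ≤ κ ((lam k) ^ 2) := hκle hkn
    have : Kn ^ 2 ≤ κ ((lam k) ^ 2) ^ 2 :=
      pow_le_pow_left₀ hKnpos.le hκk 2
    have h0 : 0 ≤ ((lam k) ^ 2)⁻¹ * e k := mul_nonneg (inv_nonneg.2 (hlamsq k).le) (he k)
    calc Kn ^ 2 * (((lam k) ^ 2)⁻¹ * e k)
        ≤ κ ((lam k) ^ 2) ^ 2 * (((lam k) ^ 2)⁻¹ * e k) :=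
          mul_le_mul_of_nonneg_right this h0
      _ = ((lam k) ^ 2)⁻¹ * κ ((lam k) ^ 2) ^ 2 * e k := by ring
  -- step 2
  have h2 : (∑' k : ℕ, (lam (n + 1 + k)) ^ 2 * κ ((lam (n + 1 + k)) ^ 2) ^ 2 * e (n + 1 + k))
      ≤ Kn ^ 2 * ∑' k : ℕ, (lam (n + 1 + k)) ^ 2 * e (n + 1 + k) := by
    rw [← tsum_mul_left]
    refine Summable.tsum_le_tsum (fun k => ?_) hsumκt (hsumt.mul_left _)
    have hκk : κ ((lam (n + 1 + k)) ^ 2) ≤ Kn := hκle (by omega)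
    have : κ ((lam (n + 1 + k)) ^ 2) ^ 2 ≤ Kn ^ 2 :=
      pow_le_pow_left₀ (hKpos _).le hκk 2
    have h0 : 0 ≤ (lam (n + 1 + k)) ^ 2 * e (n + 1 + k) := mul_nonneg (hlamsq _).le (he _)
    calc (lam (n + 1 + k)) ^ 2 * κ ((lam (n + 1 + k)) ^ 2) ^ 2 * e (n + 1 + k)
        = κ ((lam (n + 1 + k)) ^ 2) ^ 2 * ((lam (n + 1 + k)) ^ 2 * e (n + 1 + k)) := by ring
      _ ≤ Kn ^ 2 * ((lam (n + 1 + k)) ^ 2 * e (n + 1 + k)) :=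
          mul_le_mul_of_nonneg_right this h0
  -- combine
  have hKn2 : (0:ℝ) < Kn ^ 2 := by positivity
  have key : Kn ^ 2 * ((lam n) ^ 4 * ∑ k ∈ Icc 1 n, ((lam k) ^ 2)⁻¹ * e k)
      ≤ Kn ^ 2 * (C * ∑' k : ℕ, (lam (n + 1 + k)) ^ 2 * e (n + 1 + k)) := by
    calc Kn ^ 2 * ((lam n) ^ 4 * ∑ k ∈ Icc 1 n, ((lam k) ^ 2)⁻¹ * e k)
        = (lam n) ^ 4 * (Kn ^ 2 * ∑ k ∈ Icc 1 n, ((lam k) ^ 2)⁻¹ * e k) := by ring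
      _ ≤ (lam n) ^ 4 * ∑ k ∈ Icc 1 n, ((lam k) ^ 2)⁻¹ * κ ((lam k) ^ 2) ^ 2 * e k :=
          mul_le_mul_of_nonneg_left h1 (by positivity)
      _ ≤ C * ∑' k : ℕ, (lam (n + 1 + k)) ^ 2 * κ ((lam (n + 1 + k)) ^ 2) ^ 2 * e (n + 1 + k) :=
          h n hn
      _ ≤ C * (Kn ^ 2 * ∑' k : ℕ, (lam (n + 1 + k)) ^ 2 * e (n + 1 + k)) :=
          mul_le_mul_of_nonneg_left h2 hC.le
      _ = Kn ^ 2 * (C * ∑' k : ℕ, (lam (n + 1 + k)) ^ 2 * e (n + 1 + k)) := by ring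
  exact le_of_mul_le_mul_left key hKn2
end

section
/- Let α > 0 and β > 0 with β > α − 1, and suppose e_k ≍ k^{−α} (i.e., there exist c₁, c₂ > 0 with c₁ k^{−α} ≤ e_k ≤ c₂ k^{−α}) and λ_k² ≍ k^{−β}, with α > 1 so the relevant series converge. Then there exists C > 0 such that for all n ≥ 1, λ_n^4 ∑_{k=1}^n λ_k^{−2} e_k ≤ C ∑_{k=n+1}^∞ λ_k² e_k. -/
open Finset

/-- Telescoping bound for sums of negative powers: for `-1 < γ < 0`,
`∑_{k=1}^n k^γ ≤ n^{γ+1}/(γ+1)`. -/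
lemma aux_sum_rpow_neg (γ : ℝ) (hγ : -1 < γ) (hγ0 : γ < 0) (n : ℕ) :
    ∑ k ∈ Icc 1 n, (k : ℝ) ^ γ ≤ (n : ℝ) ^ (γ + 1) / (γ + 1) := by
  have hp : 0 < γ + 1 := by linarith
  induction n with
  | zero =>
    simp [Real.zero_rpow (by linarith : γ + 1 ≠ 0)]
  | succ n ih =>
    rw [Finset.sum_Icc_succ_top (by omega : 1 ≤ n + 1)]
    have hb : (0 : ℝ) < (n : ℝ) + 1 := by positivity
    have hb1 : (1 : ℝ) ≤ (n : ℝ) + 1 := by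
      have : (0 : ℝ) ≤ (n : ℝ) := Nat.cast_nonneg n
      linarith
    -- Bernoulli: (1 + s)^p ≤ 1 + p s with s = -1/(n+1), p = γ+1
    have hber := rpow_one_add_le_one_add_mul_self
      (s := -(1 / ((n : ℝ) + 1))) (p := γ + 1)
      (by rw [neg_le, neg_neg]; exact div_le_one_of_le₀ hb1 hb.le)
      hp.le (by linarith)
    have h1s : 1 + -(1 / ((n : ℝ) + 1)) = (n : ℝ) / ((n : ℝ) + 1) := by
      field_simp; ring
    rw [h1s] at hber
    have hkey : ((n : ℝ)) ^ (γ + 1) ≤ ((n : ℝ) + 1) ^ (γ + 1)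
        - (γ + 1) * ((n : ℝ) + 1) ^ γ := by
      have hmul := mul_le_mul_of_nonneg_right hber
        (le_of_lt (Real.rpow_pos_of_pos hb (γ + 1)))
      rw [Real.div_rpow (Nat.cast_nonneg n) hb.le] at hmul
      have hne : ((n : ℝ) + 1) ^ (γ + 1) ≠ 0 :=
        ne_of_gt (Real.rpow_pos_of_pos hb (γ + 1))
      rw [div_mul_cancel₀ _ hne] at hmul
      have hsplit : ((n : ℝ) + 1) ^ (γ + 1) = ((n : ℝ) + 1) * ((n : ℝ) + 1) ^ γ := by
        rw [add_comm γ 1, Real.rpow_add hb, Real.rpow_one]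
      have e1 : (1 + (γ + 1) * -(1 / ((n : ℝ) + 1))) * ((n : ℝ) + 1) ^ (γ + 1)
          = ((n : ℝ) + 1) ^ (γ + 1) - (γ + 1) * ((n : ℝ) + 1) ^ γ := by
        rw [hsplit]; field_simp; ring
      exact hmul.trans_eq e1
    have htop : ((n + 1 : ℕ) : ℝ) ^ γ ≤ (((n : ℝ) + 1) ^ (γ + 1) - (n : ℝ) ^ (γ + 1)) / (γ + 1) := by
      rw [le_div_iff₀ hp]
      push_cast
      linarith [hkey]
    calc (∑ k ∈ Icc 1 n, (k : ℝ) ^ γ) + ((n + 1 : ℕ) : ℝ) ^ γ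
        ≤ (n : ℝ) ^ (γ + 1) / (γ + 1)
          + (((n : ℝ) + 1) ^ (γ + 1) - (n : ℝ) ^ (γ + 1)) / (γ + 1) := add_le_add ih htop
      _ = ((n : ℝ) + 1) ^ (γ + 1) / (γ + 1) := by ring
      _ = ((n + 1 : ℕ) : ℝ) ^ (γ + 1) / (γ + 1) := by push_cast; ring_nf

/-- For `γ > -1`, `∑_{k=1}^n k^γ ≤ (1 + 1/(γ+1)) n^{γ+1}`. -/
lemma aux_sum_rpow (γ : ℝ) (hγ : -1 < γ) (n : ℕ) :
    ∑ k ∈ Icc 1 n, (k : ℝ) ^ γ ≤ (1 + 1 / (γ + 1)) * (n : ℝ) ^ (γ + 1) := by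
  have hp : 0 < γ + 1 := by linarith
  have hKpos : (0 : ℝ) < 1 + 1 / (γ + 1) := by
    have := one_div_pos.mpr hp
    linarith
  rcases Nat.eq_zero_or_pos n with rfl | hn
  · simp [Real.zero_rpow (by linarith : γ + 1 ≠ 0)]
  have hn0 : (0 : ℝ) < (n : ℝ) := by exact_mod_cast hn
  rcases le_or_gt 0 γ with hγ0 | hγ0
  · -- each term ≤ n^γ
    have h1 : ∑ k ∈ Icc 1 n, (k : ℝ) ^ γ ≤ ∑ k ∈ Icc 1 n, (n : ℝ) ^ γ := by
      apply Finset.sum_le_sum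
      intro k hk
      obtain ⟨-, hk2⟩ := Finset.mem_Icc.1 hk
      exact Real.rpow_le_rpow (Nat.cast_nonneg k) (by exact_mod_cast hk2) hγ0
    have h2 : ∑ k ∈ Icc 1 n, (n : ℝ) ^ γ = (n : ℝ) * (n : ℝ) ^ γ := by
      rw [Finset.sum_const, Nat.card_Icc]
      simp [nsmul_eq_mul]
    have h3 : (n : ℝ) * (n : ℝ) ^ γ = (n : ℝ) ^ (γ + 1) := by
      rw [Real.rpow_add hn0, Real.rpow_one]; ring
    have h4 : (n : ℝ) ^ (γ + 1) ≤ (1 + 1 / (γ + 1)) * (n : ℝ) ^ (γ + 1) := by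
      nlinarith [Real.rpow_pos_of_pos hn0 (γ + 1), one_div_pos.mpr hp]
    calc ∑ k ∈ Icc 1 n, (k : ℝ) ^ γ ≤ (n : ℝ) * (n : ℝ) ^ γ := h1.trans h2.le
      _ = (n : ℝ) ^ (γ + 1) := h3
      _ ≤ _ := h4
  · have h1 := aux_sum_rpow_neg γ hγ hγ0 n
    have h2 : (n : ℝ) ^ (γ + 1) / (γ + 1) ≤ (1 + 1 / (γ + 1)) * (n : ℝ) ^ (γ + 1) := by
      rw [div_eq_mul_inv, mul_comm, ← one_div]
      have := Real.rpow_pos_of_pos hn0 (γ + 1)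
      nlinarith
    exact h1.trans h2

/-- Mildly ill-posed case: if `e k ≍ k^{-α}` and `lam k ^ 2 ≍ k^{-β}` with `α > 1` and
`β > α - 1`, then the Muckenhoupt-type noise condition holds. -/
theorem stmt_2
    (α β : ℝ) (hα : 1 < α) (hβ : 0 < β) (hβα : α - 1 < β)
    (e lam : ℕ → ℝ)
    (c₁ c₂ : ℝ) (hc₁ : 0 < c₁) (hc₂ : 0 < c₂)
    (he : ∀ k : ℕ, 1 ≤ k → c₁ * (k : ℝ) ^ (-α) ≤ e k ∧ e k ≤ c₂ * (k : ℝ) ^ (-α))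
    (d₁ d₂ : ℝ) (hd₁ : 0 < d₁) (hd₂ : 0 < d₂)
    (hlam : ∀ k : ℕ, 1 ≤ k → d₁ * (k : ℝ) ^ (-β) ≤ (lam k) ^ 2 ∧ (lam k) ^ 2 ≤ d₂ * (k : ℝ) ^ (-β))
    (hlam_pos : ∀ k, 0 < lam k) :
    ∃ C > 0, ∀ n, 1 ≤ n →
      (lam n) ^ 4 * ∑ k ∈ Icc 1 n, ((lam k) ^ 2)⁻¹ * e k
        ≤ C * ∑' k : ℕ, (lam (n + 1 + k)) ^ 2 * e (n + 1 + k) := by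
  set s : ℝ := α + β with hs
  have hs1 : 1 < s := by rw [hs]; linarith
  have hp : 0 < β - α + 1 := by linarith
  set K : ℝ := 1 + 1 / (β - α + 1) with hK
  have hKpos : 0 < K := by
    have := one_div_pos.mpr hp
    rw [hK]; linarith
  set A : ℝ := d₂ ^ 2 * (c₂ / d₁) * K with hA
  have hApos : 0 < A := by positivity
  have h2s : (0 : ℝ) < (2 : ℝ) ^ s := Real.rpow_pos_of_pos two_pos s
  refine ⟨A * ((2 : ℝ) ^ s / (d₁ * c₁)), by positivity, ?_⟩
  intro n hn
  have hn0 : (0 : ℝ) < (n : ℝ) := by exact_mod_cast hn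
  -- nonnegativity of e
  have he_nonneg : ∀ k : ℕ, 1 ≤ k → 0 ≤ e k := by
    intro k hk
    have hk0 : (0 : ℝ) < (k : ℝ) := by exact_mod_cast hk
    exact le_trans (by positivity) (he k hk).1
  -- LHS bound
  have hsum_le : ∑ k ∈ Icc 1 n, ((lam k) ^ 2)⁻¹ * e k
      ≤ (c₂ / d₁) * ∑ k ∈ Icc 1 n, (k : ℝ) ^ (β - α) := by
    rw [Finset.mul_sum]
    apply Finset.sum_le_sum
    intro k hk
    obtain ⟨hk1, -⟩ := Finset.mem_Icc.1 hk
    have hk0 : (0 : ℝ) < (k : ℝ) := by exact_mod_cast hk1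
    obtain ⟨hl1, hl2⟩ := hlam k hk1
    obtain ⟨he1, he2⟩ := he k hk1
    have hrp : (0 : ℝ) < d₁ * (k : ℝ) ^ (-β) := by positivity
    have hinv : ((lam k) ^ 2)⁻¹ ≤ (d₁ * (k : ℝ) ^ (-β))⁻¹ := by
      apply inv_anti₀ hrp hl1
    have hinveq : (d₁ * (k : ℝ) ^ (-β))⁻¹ = d₁⁻¹ * (k : ℝ) ^ β := by
      rw [mul_inv, ← Real.rpow_neg hk0.le, neg_neg]
    have he0 : 0 ≤ e k := he_nonneg k hk1
    have hrw : (k : ℝ) ^ β * (k : ℝ) ^ (-α) = (k : ℝ) ^ (β - α) := by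
      rw [← Real.rpow_add hk0]; ring_nf
    calc ((lam k) ^ 2)⁻¹ * e k
        ≤ (d₁⁻¹ * (k : ℝ) ^ β) * (c₂ * (k : ℝ) ^ (-α)) := by
          apply mul_le_mul (hinveq ▸ hinv) he2 he0 (by positivity)
      _ = (c₂ / d₁) * ((k : ℝ) ^ β * (k : ℝ) ^ (-α)) := by ring
      _ = (c₂ / d₁) * (k : ℝ) ^ (β - α) := by rw [hrw]
  have hsum_rpow := aux_sum_rpow (β - α) (by linarith) n
  have hlam4 : (lam n) ^ 4 ≤ d₂ ^ 2 * (n : ℝ) ^ (-(2 * β)) := by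
    obtain ⟨-, hl2⟩ := hlam n hn
    have h1 : (lam n) ^ 4 = ((lam n) ^ 2) ^ 2 := by ring
    have h2 : ((lam n) ^ 2) ^ 2 ≤ (d₂ * (n : ℝ) ^ (-β)) ^ 2 :=
      pow_le_pow_left₀ (sq_nonneg _) hl2 2
    have h3 : (d₂ * (n : ℝ) ^ (-β)) ^ 2 = d₂ ^ 2 * (n : ℝ) ^ (-(2 * β)) := by
      rw [mul_pow, sq ((n : ℝ) ^ (-β)), ← Real.rpow_add hn0]
      ring_nf
    rw [h1, ← h3]; exact h2
  have hsum_nonneg : 0 ≤ ∑ k ∈ Icc 1 n, ((lam k) ^ 2)⁻¹ * e k := by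
    apply Finset.sum_nonneg
    intro k hk
    obtain ⟨hk1, -⟩ := Finset.mem_Icc.1 hk
    have := he_nonneg k hk1
    positivity
  have hsum_le' : ∑ k ∈ Icc 1 n, ((lam k) ^ 2)⁻¹ * e k
      ≤ (c₂ / d₁) * (K * (n : ℝ) ^ (β - α + 1)) := by
    refine hsum_le.trans ?_
    exact mul_le_mul_of_nonneg_left hsum_rpow (by positivity)
  have hLHS : (lam n) ^ 4 * ∑ k ∈ Icc 1 n, ((lam k) ^ 2)⁻¹ * e k
      ≤ A * (n : ℝ) ^ (1 - s) := by
    have h1 : (lam n) ^ 4 * ∑ k ∈ Icc 1 n, ((lam k) ^ 2)⁻¹ * e k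
        ≤ (d₂ ^ 2 * (n : ℝ) ^ (-(2 * β))) * ((c₂ / d₁) * (K * (n : ℝ) ^ (β - α + 1))) :=
      mul_le_mul hlam4 hsum_le' hsum_nonneg (by positivity)
    have h2 : (n : ℝ) ^ (-(2 * β)) * (n : ℝ) ^ (β - α + 1) = (n : ℝ) ^ (1 - s) := by
      rw [← Real.rpow_add hn0, hs]; ring_nf
    calc (lam n) ^ 4 * ∑ k ∈ Icc 1 n, ((lam k) ^ 2)⁻¹ * e k
        ≤ (d₂ ^ 2 * (n : ℝ) ^ (-(2 * β))) * ((c₂ / d₁) * (K * (n : ℝ) ^ (β - α + 1))) := h1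
      _ = A * ((n : ℝ) ^ (-(2 * β)) * (n : ℝ) ^ (β - α + 1)) := by rw [hA]; ring
      _ = A * (n : ℝ) ^ (1 - s) := by rw [h2]
  -- RHS: summability and tail lower bound
  set g : ℕ → ℝ := fun k => (lam (n + 1 + k)) ^ 2 * e (n + 1 + k) with hg
  have hm_pos : ∀ k : ℕ, (0 : ℝ) < ((n + 1 + k : ℕ) : ℝ) := by
    intro k
    have : 1 ≤ n + 1 + k := by omega
    exact_mod_cast Nat.lt_of_lt_of_le Nat.zero_lt_one this
  have hg_nonneg : ∀ k, 0 ≤ g k := by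
    intro k
    have h1 : 1 ≤ n + 1 + k := by omega
    have := he_nonneg (n + 1 + k) h1
    rw [hg]
    positivity
  have hpow_sum : Summable (fun k : ℕ => ((n + 1 + k : ℕ) : ℝ) ^ (-s)) := by
    have h0 : Summable (fun m : ℕ => (m : ℝ) ^ (-s)) :=
      Real.summable_nat_rpow.2 (by linarith)
    have h1 := (summable_nat_add_iff (f := fun m : ℕ => (m : ℝ) ^ (-s)) (n + 1)).2 h0
    exact h1.congr fun k => by rw [Nat.add_comm]
  have hg_rpow : ∀ k : ℕ, d₁ * c₁ * ((n + 1 + k : ℕ) : ℝ) ^ (-s) ≤ g k := by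
    intro k
    have h1 : 1 ≤ n + 1 + k := by omega
    obtain ⟨hl1, -⟩ := hlam (n + 1 + k) h1
    obtain ⟨he1, -⟩ := he (n + 1 + k) h1
    have hm := hm_pos k
    have hrw : ((n + 1 + k : ℕ) : ℝ) ^ (-β) * ((n + 1 + k : ℕ) : ℝ) ^ (-α)
        = ((n + 1 + k : ℕ) : ℝ) ^ (-s) := by
      rw [← Real.rpow_add hm, hs]; ring_nf
    calc d₁ * c₁ * ((n + 1 + k : ℕ) : ℝ) ^ (-s)
        = (d₁ * ((n + 1 + k : ℕ) : ℝ) ^ (-β)) * (c₁ * ((n + 1 + k : ℕ) : ℝ) ^ (-α)) := by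
          rw [← hrw]; ring
      _ ≤ (lam (n + 1 + k)) ^ 2 * e (n + 1 + k) :=
          mul_le_mul hl1 he1 (by positivity) (sq_nonneg _)
  have hg_le : ∀ k : ℕ, g k ≤ d₂ * c₂ * ((n + 1 + k : ℕ) : ℝ) ^ (-s) := by
    intro k
    have h1 : 1 ≤ n + 1 + k := by omega
    obtain ⟨-, hl2⟩ := hlam (n + 1 + k) h1
    obtain ⟨-, he2⟩ := he (n + 1 + k) h1
    have hm := hm_pos k
    have hrw : ((n + 1 + k : ℕ) : ℝ) ^ (-β) * ((n + 1 + k : ℕ) : ℝ) ^ (-α)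
        = ((n + 1 + k : ℕ) : ℝ) ^ (-s) := by
      rw [← Real.rpow_add hm, hs]; ring_nf
    have he0 : 0 ≤ e (n + 1 + k) := he_nonneg _ h1
    calc g k = (lam (n + 1 + k)) ^ 2 * e (n + 1 + k) := rfl
      _ ≤ (d₂ * ((n + 1 + k : ℕ) : ℝ) ^ (-β)) * (c₂ * ((n + 1 + k : ℕ) : ℝ) ^ (-α)) :=
          mul_le_mul hl2 he2 he0 (by positivity)
      _ = d₂ * c₂ * ((n + 1 + k : ℕ) : ℝ) ^ (-s) := by rw [← hrw]; ring
  have hgS : Summable g :=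
    Summable.of_nonneg_of_le hg_nonneg hg_le (hpow_sum.mul_left (d₂ * c₂))
  -- tail lower bound
  have htail : (n : ℝ) * (d₁ * c₁ * ((2 * n : ℝ)) ^ (-s)) ≤ ∑' k : ℕ, g k := by
    have h2n : (0 : ℝ) < 2 * (n : ℝ) := by linarith
    have hstep : ∀ k ∈ Finset.range n, d₁ * c₁ * ((2 * n : ℝ)) ^ (-s) ≤ g k := by
      intro k hk
      have hkn : k < n := Finset.mem_range.1 hk
      have hle : ((n + 1 + k : ℕ) : ℝ) ≤ 2 * (n : ℝ) := by
        have : n + 1 + k ≤ 2 * n := by omega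
        calc ((n + 1 + k : ℕ) : ℝ) ≤ ((2 * n : ℕ) : ℝ) := by exact_mod_cast this
          _ = 2 * (n : ℝ) := by push_cast; ring
      have hmono : ((2 * n : ℝ)) ^ (-s) ≤ ((n + 1 + k : ℕ) : ℝ) ^ (-s) :=
        Real.rpow_le_rpow_of_nonpos (hm_pos k) hle (by linarith)
      calc d₁ * c₁ * ((2 * n : ℝ)) ^ (-s)
          ≤ d₁ * c₁ * ((n + 1 + k : ℕ) : ℝ) ^ (-s) :=
            mul_le_mul_of_nonneg_left hmono (by positivity)
        _ ≤ g k := hg_rpow k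
    calc (n : ℝ) * (d₁ * c₁ * ((2 * n : ℝ)) ^ (-s))
        = ∑ _k ∈ Finset.range n, d₁ * c₁ * ((2 * n : ℝ)) ^ (-s) := by
          rw [Finset.sum_const, Finset.card_range, nsmul_eq_mul]
      _ ≤ ∑ k ∈ Finset.range n, g k := Finset.sum_le_sum hstep
      _ ≤ ∑' k : ℕ, g k := Summable.sum_le_tsum _ (fun k _ => hg_nonneg k) hgS
  -- combine
  have hrw2n : (n : ℝ) * (d₁ * c₁ * ((2 * n : ℝ)) ^ (-s))
      = d₁ * c₁ * ((2 : ℝ) ^ (-s) * (n : ℝ) ^ (1 - s)) := by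
    rw [Real.mul_rpow (by norm_num : (0:ℝ) ≤ 2) hn0.le]
    have : (n : ℝ) ^ (1 - s) = (n : ℝ) * (n : ℝ) ^ (-s) := by
      rw [sub_eq_add_neg, Real.rpow_add hn0, Real.rpow_one]
    rw [this]; ring
  have hfinal : A * (n : ℝ) ^ (1 - s)
      ≤ A * ((2 : ℝ) ^ s / (d₁ * c₁)) * ∑' k : ℕ, g k := by
    have h1 : A * ((2 : ℝ) ^ s / (d₁ * c₁)) * ((n : ℝ) * (d₁ * c₁ * ((2 * n : ℝ)) ^ (-s)))
        ≤ A * ((2 : ℝ) ^ s / (d₁ * c₁)) * ∑' k : ℕ, g k :=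
      mul_le_mul_of_nonneg_left htail (by positivity)
    have h22 : (2 : ℝ) ^ s * (2 : ℝ) ^ (-s) = 1 := by
      rw [← Real.rpow_add two_pos, add_neg_cancel, Real.rpow_zero]
    have h2 : A * ((2 : ℝ) ^ s / (d₁ * c₁)) * ((n : ℝ) * (d₁ * c₁ * ((2 * n : ℝ)) ^ (-s)))
        = A * (n : ℝ) ^ (1 - s) := by
      rw [hrw2n]
      have h3 : A * ((2 : ℝ) ^ s / (d₁ * c₁)) * (d₁ * c₁ * ((2 : ℝ) ^ (-s) * (n : ℝ) ^ (1 - s)))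
          = A * ((2 : ℝ) ^ s * (2 : ℝ) ^ (-s)) * (n : ℝ) ^ (1 - s) := by
        field_simp
      rw [h3, h22, mul_one]
    exact le_of_eq_of_le h2.symm h1
  calc (lam n) ^ 4 * ∑ k ∈ Icc 1 n, ((lam k) ^ 2)⁻¹ * e k
      ≤ A * (n : ℝ) ^ (1 - s) := hLHS
    _ ≤ A * ((2 : ℝ) ^ s / (d₁ * c₁)) * ∑' k : ℕ, g k := hfinal
end

section
/- Let a ∈ (0,1) and α > 1, and suppose e_k ≍ k^{−α} and λ_k² ≍ a^k. Then there exists C > 0 such that for all n ≥ 1, λ_n^4 ∑_{k=1}^n λ_k^{−2} e_k ≤ C ∑_{k=n+1}^∞ λ_k² e_k. -/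
open Finset

/-- Severely ill-posed case: if `e k ≍ k^{-α}` with `α > 1` and `lam k ^ 2 ≍ a^k` with
`a ∈ (0,1)`, then the Muckenhoupt-type noise condition holds. -/
theorem stmt_3
    (a α : ℝ) (ha : 0 < a) (ha1 : a < 1) (hα : 1 < α)
    (e lam : ℕ → ℝ)
    (c₁ c₂ : ℝ) (hc₁ : 0 < c₁) (hc₂ : 0 < c₂)
    (he : ∀ k : ℕ, 1 ≤ k → c₁ * (k : ℝ) ^ (-α) ≤ e k ∧ e k ≤ c₂ * (k : ℝ) ^ (-α))
    (d₁ d₂ : ℝ) (hd₁ : 0 < d₁) (hd₂ : 0 < d₂)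
    (hlam : ∀ k : ℕ, 1 ≤ k → d₁ * a ^ k ≤ (lam k) ^ 2 ∧ (lam k) ^ 2 ≤ d₂ * a ^ k)
    (hlam_pos : ∀ k, 0 < lam k) :
    ∃ C > 0, ∀ n, 1 ≤ n →
      (lam n) ^ 4 * ∑ k ∈ Icc 1 n, ((lam k) ^ 2)⁻¹ * e k
        ≤ C * ∑' k : ℕ, (lam (n + 1 + k)) ^ 2 * e (n + 1 + k) := by
  have hα0 : (0:ℝ) ≤ α := by linarith
  set m := ⌈α⌉₊ with hm_def
  have hαm : α ≤ (m:ℝ) := Nat.le_ceil α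
  have ha' : a ≠ 0 := ne_of_gt ha
  have h1 : Summable (fun n : ℕ => (n:ℝ)^m * a^n) :=
    summable_pow_mul_geometric_of_norm_lt_one m
      (by rw [Real.norm_eq_abs, abs_of_pos ha]; exact ha1)
  have h2 : Summable (fun j : ℕ => ((j:ℝ)+1)^m * a^j) := by
    have h3 := (summable_nat_add_iff 1).mpr h1
    have h4 := h3.mul_left a⁻¹
    refine h4.congr fun j => ?_
    push_cast
    rw [pow_succ]
    field_simp
  set S := ∑' j : ℕ, ((j:ℝ)+1)^m * a^j with hS_def
  have hterm_nonneg : ∀ j : ℕ, 0 ≤ ((j:ℝ)+1)^m * a^j := fun j => by positivity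
  have hS1 : (1:ℝ) ≤ S := by
    have := Summable.le_tsum h2 0 (fun j _ => hterm_nonneg j)
    simpa using this
  have hSpos : (0:ℝ) < S := lt_of_lt_of_le one_pos hS1
  refine ⟨(d₂^2*c₂/d₁ * (2^m/a) * S) / (d₁*c₁), by positivity, ?_⟩
  intro n hn
  have hF : (0:ℝ) < a^(n+1) * ((n:ℝ)+1)^(-α) := by positivity
  -- the tail sum
  set f := fun k : ℕ => (lam (n+1+k))^2 * e (n+1+k) with hf_def
  have hfnonneg : ∀ k, 0 ≤ f k := fun k =>
    mul_nonneg (sq_nonneg _) (le_trans (by positivity) (he _ (by omega)).1)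
  have hfs : Summable f := by
    apply Summable.of_nonneg_of_le hfnonneg (fun k => ?_)
      ((summable_geometric_of_lt_one ha.le ha1).mul_left (d₂*c₂*a^(n+1)))
    have h1' := (hlam (n+1+k) (by omega)).2
    have h2' := (he (n+1+k) (by omega)).2
    have h3' : ((n+1+k:ℕ):ℝ)^(-α) ≤ 1 := by
      apply Real.rpow_le_one_of_one_le_of_nonpos
      · push_cast; linarith [Nat.cast_nonneg (α := ℝ) n, Nat.cast_nonneg (α := ℝ) k]
      · linarith
    have hepos : 0 ≤ e (n+1+k) := le_trans (by positivity) (he _ (by omega)).1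
    calc f k ≤ (d₂*a^(n+1+k)) * (c₂ * ((n+1+k:ℕ):ℝ)^(-α)) :=
          mul_le_mul h1' h2' hepos (by positivity)
      _ ≤ (d₂*a^(n+1+k)) * (c₂ * 1) := by
          apply mul_le_mul_of_nonneg_left (mul_le_mul_of_nonneg_left h3' hc₂.le)
          positivity
      _ = d₂*c₂*a^(n+1) * a^k := by rw [pow_add]; ring
  have htail : d₁*c₁*(a^(n+1) * ((n:ℝ)+1)^(-α)) ≤ ∑' k : ℕ, f k := by
    have h1' := (hlam (n+1) (by omega)).1
    have h2' := (he (n+1) (by omega)).1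
    have hstep : d₁*c₁*(a^(n+1) * ((n:ℝ)+1)^(-α)) ≤ f 0 := by
      calc d₁*c₁*(a^(n+1)*((n:ℝ)+1)^(-α))
          = (d₁*a^(n+1)) * (c₁ * ((n+1:ℕ):ℝ)^(-α)) := by push_cast; ring
        _ ≤ (lam (n+1))^2 * e (n+1) := by
            apply mul_le_mul h1' h2' (by positivity) (sq_nonneg _)
        _ = f 0 := by simp [hf_def]
    exact hstep.trans (Summable.le_tsum hfs 0 (fun j _ => hfnonneg j))
  -- termwise bound on the left sum
  have hsum1 : ∀ k ∈ Icc 1 n, ((lam k)^2)⁻¹ * e k ≤ (d₁*a^k)⁻¹ * (c₂ * (k:ℝ)^(-α)) := by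
    intro k hk
    obtain ⟨hk1, hk2⟩ := mem_Icc.mp hk
    have h := hlam k hk1
    have he' := he k hk1
    have hl : (0:ℝ) < d₁ * a^k := by positivity
    have hepos : 0 ≤ e k := le_trans (by positivity) he'.1
    exact mul_le_mul (inv_anti₀ hl h.1) he'.2 hepos (by positivity)
  have hlamn4 : lam n ^ 4 ≤ (d₂*a^n)^2 := by
    have h := (hlam n hn).2
    calc lam n ^ 4 = ((lam n)^2)^2 := by ring
      _ ≤ (d₂*a^n)^2 := pow_le_pow_left₀ (sq_nonneg _) h 2
  have horig_nonneg : 0 ≤ ∑ k ∈ Icc 1 n, ((lam k)^2)⁻¹ * e k := by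
    apply Finset.sum_nonneg
    intro k hk
    obtain ⟨hk1, _⟩ := mem_Icc.mp hk
    exact mul_nonneg (inv_nonneg.mpr (sq_nonneg _))
      (le_trans (by positivity) (he k hk1).1)
  -- key per-term inequality
  have hkey : ∀ k ∈ Icc 1 n,
      (d₂^2*c₂/d₁) * (a^n * a^n * ((a^k)⁻¹ * (k:ℝ)^(-α)))
        ≤ (d₂^2*c₂/d₁) * ((2^m/a) * (a^(n+1) * ((n:ℝ)+1)^(-α)) *
            ((((n-k:ℕ):ℝ)+1)^m * a^(n-k))) := by
    intro k hk
    obtain ⟨hk1, hkn⟩ := mem_Icc.mp hk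
    have hk0 : (0:ℝ) < (k:ℝ) := by exact_mod_cast hk1
    have hcast : ((n-k:ℕ):ℝ) = (n:ℝ) - (k:ℝ) := by
      push_cast [hkn]; ring
    have hnk0 : (0:ℝ) ≤ ((n-k:ℕ):ℝ) := Nat.cast_nonneg _
    have hkR : (1:ℝ) ≤ (k:ℝ) := by exact_mod_cast hk1
    have hnR : (k:ℝ) ≤ (n:ℝ) := by exact_mod_cast hkn
    have hdiv : ((n:ℝ)+1)/(k:ℝ) ≤ 2*(((n-k:ℕ):ℝ)+1) := by
      rw [div_le_iff₀ hk0, hcast]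
      nlinarith [mul_nonneg (by linarith : (0:ℝ) ≤ (k:ℝ)-1)
        (by linarith : (0:ℝ) ≤ (n:ℝ)-(k:ℝ))]
    have hb1 : (1:ℝ) ≤ 2*(((n-k:ℕ):ℝ)+1) := by linarith
    have hrp : (k:ℝ)^(-α) ≤ 2^m * ((n:ℝ)+1)^(-α) * ((((n-k:ℕ):ℝ))+1)^m := by
      have hnp : (0:ℝ) < ((n:ℝ)+1)^α := Real.rpow_pos_of_pos (by positivity) _
      have hkp : (0:ℝ) < (k:ℝ)^α := Real.rpow_pos_of_pos hk0 _
      have heq1 : (k:ℝ)^(-α) = ((n:ℝ)+1)^(-α) * (((n:ℝ)+1)/(k:ℝ))^α := by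
        rw [Real.div_rpow (by positivity) hk0.le, Real.rpow_neg hk0.le,
          Real.rpow_neg (by positivity : (0:ℝ) ≤ (n:ℝ)+1)]
        field_simp
      calc (k:ℝ)^(-α) = ((n:ℝ)+1)^(-α) * (((n:ℝ)+1)/(k:ℝ))^α := heq1
        _ ≤ ((n:ℝ)+1)^(-α) * (2*(((n-k:ℕ):ℝ)+1))^α := by
            apply mul_le_mul_of_nonneg_left
              (Real.rpow_le_rpow (by positivity) hdiv hα0) (by positivity)
        _ ≤ ((n:ℝ)+1)^(-α) * (2*(((n-k:ℕ):ℝ)+1))^(m:ℝ) := by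
            apply mul_le_mul_of_nonneg_left
              (Real.rpow_le_rpow_of_exponent_le hb1 hαm) (by positivity)
        _ = ((n:ℝ)+1)^(-α) * (2*(((n-k:ℕ):ℝ)+1))^m := by
            rw [Real.rpow_natCast]
        _ = 2^m * ((n:ℝ)+1)^(-α) * ((((n-k:ℕ):ℝ))+1)^m := by
            rw [mul_pow]; ring
    apply mul_le_mul_of_nonneg_left _ (by positivity)
    have hak : a^k ≠ 0 := pow_ne_zero _ ha'
    calc a^n * a^n * ((a^k)⁻¹ * (k:ℝ)^(-α))
        = (a^(n-k)*a^n) * (k:ℝ)^(-α) := by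
          rw [pow_sub₀ a ha' hkn]; ring
      _ ≤ (a^(n-k)*a^n) * (2^m * ((n:ℝ)+1)^(-α) * ((((n-k:ℕ):ℝ))+1)^m) :=
          mul_le_mul_of_nonneg_left hrp (by positivity)
      _ = (2^m/a) * (a^(n+1) * ((n:ℝ)+1)^(-α)) * ((((n-k:ℕ):ℝ)+1)^m * a^(n-k)) := by
          rw [pow_succ]
          field_simp
  -- reindexed sum bound
  have hsumS : ∑ k ∈ Icc 1 n, ((((n-k:ℕ):ℝ))+1)^m * a^(n-k) ≤ S := by
    have hinj : ∀ x ∈ Icc 1 n, ∀ y ∈ Icc 1 n, n - x = n - y → x = y := by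
      intro x hx y hy h
      simp only [mem_Icc] at hx hy
      omega
    calc ∑ k ∈ Icc 1 n, ((((n-k:ℕ):ℝ))+1)^m * a^(n-k)
        = ∑ j ∈ (Icc 1 n).image (fun k => n - k), ((j:ℝ)+1)^m * a^j :=
          (Finset.sum_image (s := Icc 1 n) (g := fun k => n - k)
            (f := fun j : ℕ => ((j:ℝ)+1)^m * a^j) hinj).symm
      _ ≤ S := Summable.sum_le_tsum _ (fun j _ => hterm_nonneg j) h2
  calc (lam n) ^ 4 * ∑ k ∈ Icc 1 n, ((lam k)^2)⁻¹ * e k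
      ≤ (d₂*a^n)^2 * ∑ k ∈ Icc 1 n, (d₁*a^k)⁻¹ * (c₂ * (k:ℝ)^(-α)) :=
        mul_le_mul hlamn4 (Finset.sum_le_sum hsum1) horig_nonneg (by positivity)
    _ = ∑ k ∈ Icc 1 n, (d₂^2*c₂/d₁) * (a^n * a^n * ((a^k)⁻¹ * (k:ℝ)^(-α))) := by
        rw [Finset.mul_sum]
        refine Finset.sum_congr rfl fun k hk => ?_
        field_simp
    _ ≤ ∑ k ∈ Icc 1 n, (d₂^2*c₂/d₁) * ((2^m/a) * (a^(n+1) * ((n:ℝ)+1)^(-α)) *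
          ((((n-k:ℕ):ℝ)+1)^m * a^(n-k))) := Finset.sum_le_sum hkey
    _ = (d₂^2*c₂/d₁) * ((2^m/a) * (a^(n+1) * ((n:ℝ)+1)^(-α))) *
          ∑ k ∈ Icc 1 n, ((((n-k:ℕ):ℝ))+1)^m * a^(n-k) := by
        rw [Finset.mul_sum]
        exact Finset.sum_congr rfl fun k _ => by ring
    _ ≤ (d₂^2*c₂/d₁) * ((2^m/a) * (a^(n+1) * ((n:ℝ)+1)^(-α))) * S :=
        mul_le_mul_of_nonneg_left hsumS (by positivity)
    _ = (d₂^2*c₂/d₁ * (2^m/a) * S) / (d₁*c₁) * (d₁*c₁*(a^(n+1) * ((n:ℝ)+1)^(-α))) := by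
        field_simp
    _ ≤ (d₂^2*c₂/d₁ * (2^m/a) * S) / (d₁*c₁) * ∑' k : ℕ, f k :=
        mul_le_mul_of_nonneg_left htail (by positivity)
end

section
/- Let β > 0, α > 1, γ > 0 with β > 2γβ + α − 1, and suppose e_k ≍ k^{−α}, λ_k² ≍ k^{−β}, w_k ≍ k^{−2γβ}. Then there exists C > 0 such that for all n ≥ 1, λ_n^4 ∑_{k=1}^n λ_k^{−2} w_k e_k ≤ C ∑_{k=n+1}^∞ λ_k² w_k e_k. -/
open Finset


lemma key_diff {p : ℝ} (hp : 0 < p) :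
    ∃ c ≥ (1:ℝ), ∀ m : ℕ, 2 ≤ m →
      ((m:ℝ)) ^ (p - 1) ≤ c * ((m:ℝ) ^ p - ((m:ℝ) - 1) ^ p) := by
  rcases le_or_gt p 1 with hp1 | hp1
  · refine ⟨max 1 (1/p), le_max_left _ _, fun m hm => ?_⟩
    have hx2 : (2:ℝ) ≤ (m:ℝ) := by exact_mod_cast hm
    have hx0 : (0:ℝ) < m := by linarith
    have hxm1 : (0:ℝ) ≤ (m:ℝ) - 1 := by linarith
    have hb : ((1:ℝ) + (-(1/(m:ℝ)))) ^ p ≤ 1 + p * (-(1/(m:ℝ))) := by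
      apply rpow_one_add_le_one_add_mul_self _ hp.le hp1
      have : (1:ℝ)/(m:ℝ) ≤ 1 := by
        rw [div_le_one hx0]; linarith
      linarith
    have h1 : (1:ℝ) + (-(1/(m:ℝ))) = ((m:ℝ) - 1) / m := by field_simp; ring
    rw [h1] at hb
    have h2 : (((m:ℝ) - 1) / m) ^ p = ((m:ℝ) - 1) ^ p / (m:ℝ) ^ p :=
      Real.div_rpow hxm1 hx0.le p
    rw [h2] at hb
    have hmp : (0:ℝ) < (m:ℝ) ^ p := Real.rpow_pos_of_pos hx0 _
    have hb' : ((m:ℝ) - 1) ^ p ≤ (1 + p * (-(1/(m:ℝ)))) * (m:ℝ) ^ p := by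
      rw [← div_le_iff₀ hmp]; exact hb
    have h3 : (m:ℝ) ^ p * (1/(m:ℝ)) = (m:ℝ) ^ (p - 1) := by
      rw [Real.rpow_sub hx0, Real.rpow_one]; field_simp
    have hb'' : p * (m:ℝ) ^ (p - 1) ≤ (m:ℝ) ^ p - ((m:ℝ) - 1) ^ p := by
      nlinarith [hb']
    have hdiffpos : (0:ℝ) ≤ (m:ℝ) ^ p - ((m:ℝ) - 1) ^ p := by
      nlinarith [Real.rpow_pos_of_pos hx0 (p-1)]
    calc ((m:ℝ)) ^ (p - 1) ≤ (1/p) * ((m:ℝ) ^ p - ((m:ℝ) - 1) ^ p) := by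
          rw [div_mul_eq_mul_div, le_div_iff₀ hp]; linarith
      _ ≤ max 1 (1/p) * ((m:ℝ) ^ p - ((m:ℝ) - 1) ^ p) :=
          mul_le_mul_of_nonneg_right (le_max_right _ _) hdiffpos
  · refine ⟨max 1 (2 ^ (p-1) / p), le_max_left _ _, fun m hm => ?_⟩
    have hx2 : (2:ℝ) ≤ (m:ℝ) := by exact_mod_cast hm
    have hx0 : (0:ℝ) < m := by linarith
    have hxm1 : (0:ℝ) < (m:ℝ) - 1 := by linarith
    have hb : 1 + p * (1/((m:ℝ)-1)) ≤ ((1:ℝ) + 1/((m:ℝ)-1)) ^ p := by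
      apply one_add_mul_self_le_rpow_one_add _ hp1.le
      have : (0:ℝ) ≤ 1/((m:ℝ)-1) := by positivity
      linarith
    have h1 : (1:ℝ) + 1/((m:ℝ)-1) = (m:ℝ) / ((m:ℝ) - 1) := by field_simp; ring
    rw [h1] at hb
    have h2 : ((m:ℝ) / ((m:ℝ)-1)) ^ p = (m:ℝ) ^ p / ((m:ℝ)-1) ^ p :=
      Real.div_rpow hx0.le hxm1.le p
    rw [h2] at hb
    have hm1p : (0:ℝ) < ((m:ℝ)-1) ^ p := Real.rpow_pos_of_pos hxm1 _
    have hb' : (1 + p * (1/((m:ℝ)-1))) * ((m:ℝ)-1) ^ p ≤ (m:ℝ) ^ p := by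
      rw [← le_div_iff₀ hm1p]; exact hb
    have h3 : ((m:ℝ)-1) ^ p * (1/((m:ℝ)-1)) = ((m:ℝ)-1) ^ (p - 1) := by
      rw [Real.rpow_sub hxm1, Real.rpow_one]; field_simp
    have hb'' : ((m:ℝ)-1) ^ p + p * ((m:ℝ)-1) ^ (p-1) ≤ (m:ℝ) ^ p := by
      nlinarith [hb']
    -- (m-1)^(p-1) ≥ (m/2)^(p-1)
    have h4 : ((m:ℝ)/2) ^ (p-1) ≤ ((m:ℝ)-1) ^ (p-1) := by
      apply Real.rpow_le_rpow (by positivity) (by linarith) (by linarith)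
    have h5 : ((m:ℝ)/2) ^ (p-1) = (m:ℝ) ^ (p-1) / 2 ^ (p-1) :=
      Real.div_rpow hx0.le (by norm_num) (p-1)
    have h2p : (0:ℝ) < 2 ^ (p-1) := Real.rpow_pos_of_pos (by norm_num) _
    have hb3 : p * ((m:ℝ) ^ (p-1) / 2 ^ (p-1)) ≤ (m:ℝ) ^ p - ((m:ℝ)-1) ^ p := by
      rw [h5] at h4; nlinarith
    have hdiffpos : (0:ℝ) ≤ (m:ℝ) ^ p - ((m:ℝ) - 1) ^ p := by
      nlinarith [Real.rpow_pos_of_pos hx0 (p-1), h2p,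
        div_pos (Real.rpow_pos_of_pos hx0 (p-1)) h2p]
    calc ((m:ℝ)) ^ (p - 1) ≤ (2 ^ (p-1) / p) * ((m:ℝ) ^ p - ((m:ℝ) - 1) ^ p) := by
          rw [div_mul_eq_mul_div, le_div_iff₀ hp]
          calc (m:ℝ) ^ (p-1) * p = p * ((m:ℝ) ^ (p-1) / 2 ^ (p-1)) * 2 ^ (p-1) := by
                field_simp
            _ ≤ ((m:ℝ) ^ p - ((m:ℝ)-1) ^ p) * 2 ^ (p-1) := by
                apply mul_le_mul_of_nonneg_right hb3 h2p.le
            _ = 2 ^ (p-1) * ((m:ℝ) ^ p - ((m:ℝ)-1) ^ p) := by ring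
      _ ≤ max 1 (2 ^ (p-1) / p) * ((m:ℝ) ^ p - ((m:ℝ) - 1) ^ p) :=
          mul_le_mul_of_nonneg_right (le_max_right _ _) hdiffpos

lemma sum_rpow_le {s : ℝ} (hs : -1 < s) :
    ∃ C > (0:ℝ), ∀ n : ℕ, 1 ≤ n → ∑ k ∈ Icc 1 n, (k:ℝ) ^ s ≤ C * (n:ℝ) ^ (s + 1) := by
  obtain ⟨c, hc1, hc⟩ := key_diff (p := s + 1) (by linarith)
  refine ⟨c, by linarith, fun n hn => ?_⟩
  induction n, hn using Nat.le_induction with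
  | base => simp [Real.one_rpow]; linarith
  | succ n hn ih =>
    rw [Finset.sum_Icc_succ_top (by omega)]
    have hkey := hc (n + 1) (by omega)
    have hcast : ((n + 1 : ℕ) : ℝ) = (n : ℝ) + 1 := by push_cast; ring
    rw [hcast] at hkey ⊢
    have : ((n:ℝ) + 1 - 1) = (n:ℝ) := by ring
    rw [this] at hkey
    have h1 : ((n:ℝ) + 1) ^ s = ((n:ℝ) + 1) ^ (s + 1 - 1) := by norm_num
    rw [h1]
    linarith [hkey]



/-- Mildly ill-posed case with Hölder-type weights: if `e k ≍ k^{-α}`, `lam k ^ 2 ≍ k^{-β}`,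
`w k ≍ k^{-2γβ}` with `α > 1`, `γ > 0`, `β > 2γβ + α - 1`, then the κ-weighted
Muckenhoupt-type noise condition holds. -/
theorem stmt_5
    (α β γ : ℝ) (hβ : 0 < β) (hα : 1 < α) (hγ : 0 < γ) (hβγα : 2 * γ * β + α - 1 < β)
    (e lam w : ℕ → ℝ)
    (c₁ c₂ : ℝ) (hc₁ : 0 < c₁) (hc₂ : 0 < c₂)
    (he : ∀ k : ℕ, 1 ≤ k → c₁ * (k : ℝ) ^ (-α) ≤ e k ∧ e k ≤ c₂ * (k : ℝ) ^ (-α))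
    (d₁ d₂ : ℝ) (hd₁ : 0 < d₁) (hd₂ : 0 < d₂)
    (hlam : ∀ k : ℕ, 1 ≤ k → d₁ * (k : ℝ) ^ (-β) ≤ (lam k) ^ 2 ∧ (lam k) ^ 2 ≤ d₂ * (k : ℝ) ^ (-β))
    (hlam_pos : ∀ k, 0 < lam k)
    (b₁ b₂ : ℝ) (hb₁ : 0 < b₁) (hb₂ : 0 < b₂)
    (hw : ∀ k : ℕ, 1 ≤ k → b₁ * (k : ℝ) ^ (-(2 * γ * β)) ≤ w k ∧ w k ≤ b₂ * (k : ℝ) ^ (-(2 * γ * β))) :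
    ∃ C > 0, ∀ n, 1 ≤ n →
      (lam n) ^ 4 * ∑ k ∈ Icc 1 n, ((lam k) ^ 2)⁻¹ * w k * e k
        ≤ C * ∑' k : ℕ, (lam (n + 1 + k)) ^ 2 * w (n + 1 + k) * e (n + 1 + k) := by
  have hγβ : 0 < γ * β := mul_pos hγ hβ
  set s : ℝ := β - 2 * γ * β - α with hs_def
  set t : ℝ := s - 2 * β with ht_def
  have hs : -1 < s := by rw [hs_def]; linarith
  have ht : t < -1 := by rw [ht_def, hs_def]; linarith
  have ht0 : t ≤ 0 := by linarith
  obtain ⟨C₀, hC₀, hsum⟩ := sum_rpow_le hs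
  set K₁ : ℝ := d₁⁻¹ * b₂ * c₂ with hK₁_def
  set K₂ : ℝ := d₁ * b₁ * c₁ with hK₂_def
  have hK₁ : 0 < K₁ := by positivity
  have hK₂ : 0 < K₂ := by positivity
  have h2t : (0:ℝ) < 2 ^ t := Real.rpow_pos_of_pos (by norm_num) t
  refine ⟨(d₂ ^ 2 * K₁ * C₀) / (K₂ * 2 ^ t), by positivity, fun n hn => ?_⟩
  have hn0 : (0:ℝ) < n := by exact_mod_cast hn
  -- positivity of weights at each index ≥ 1
  have hwpos : ∀ k : ℕ, 1 ≤ k → 0 < w k := fun k hk =>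
    lt_of_lt_of_le (by positivity) (hw k hk).1
  have hepos : ∀ k : ℕ, 1 ≤ k → 0 < e k := fun k hk =>
    lt_of_lt_of_le (by positivity) (he k hk).1
  have hlamsq : ∀ k : ℕ, 0 < (lam k) ^ 2 := fun k => pow_pos (hlam_pos k) 2
  -- termwise upper bound on LHS sum
  have hterm : ∀ k ∈ Icc 1 n, ((lam k) ^ 2)⁻¹ * w k * e k ≤ K₁ * (k:ℝ) ^ s := by
    intro k hk
    have hk1 : 1 ≤ k := (Finset.mem_Icc.mp hk).1
    have hk0 : (0:ℝ) < k := by exact_mod_cast hk1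
    have h1 : ((lam k) ^ 2)⁻¹ ≤ d₁⁻¹ * (k:ℝ) ^ β := by
      have := (hlam k hk1).1
      have hpos : (0:ℝ) < d₁ * (k:ℝ) ^ (-β) := by positivity
      have hinv : ((lam k) ^ 2)⁻¹ ≤ (d₁ * (k:ℝ) ^ (-β))⁻¹ :=
        inv_anti₀ hpos this
      calc ((lam k) ^ 2)⁻¹ ≤ (d₁ * (k:ℝ) ^ (-β))⁻¹ := hinv
        _ = d₁⁻¹ * (k:ℝ) ^ β := by
            rw [mul_inv, Real.rpow_neg hk0.le, inv_inv]
    have h2 := (hw k hk1).2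
    have h3 := (he k hk1).2
    have hwn : 0 ≤ w k := (hwpos k hk1).le
    have hen : 0 ≤ e k := (hepos k hk1).le
    have := mul_le_mul (mul_le_mul h1 h2 hwn (by positivity)) h3 hen (by positivity)
    calc ((lam k) ^ 2)⁻¹ * w k * e k
        ≤ d₁⁻¹ * (k:ℝ) ^ β * (b₂ * (k:ℝ) ^ (-(2 * γ * β))) * (c₂ * (k:ℝ) ^ (-α)) := this
      _ = K₁ * ((k:ℝ) ^ β * (k:ℝ) ^ (-(2 * γ * β)) * (k:ℝ) ^ (-α)) := by
          rw [hK₁_def]; ring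
      _ = K₁ * (k:ℝ) ^ s := by
          rw [← Real.rpow_add hk0, ← Real.rpow_add hk0, hs_def]
          ring_nf
  have hSnonneg : 0 ≤ ∑ k ∈ Icc 1 n, ((lam k) ^ 2)⁻¹ * w k * e k := by
    apply Finset.sum_nonneg
    intro k hk
    have hk1 : 1 ≤ k := (Finset.mem_Icc.mp hk).1
    have := hlamsq k
    have := hwpos k hk1
    have := hepos k hk1
    positivity
  have hS : ∑ k ∈ Icc 1 n, ((lam k) ^ 2)⁻¹ * w k * e k ≤ K₁ * C₀ * (n:ℝ) ^ (s + 1) := by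
    calc ∑ k ∈ Icc 1 n, ((lam k) ^ 2)⁻¹ * w k * e k
        ≤ ∑ k ∈ Icc 1 n, K₁ * (k:ℝ) ^ s := Finset.sum_le_sum hterm
      _ = K₁ * ∑ k ∈ Icc 1 n, (k:ℝ) ^ s := by rw [Finset.mul_sum]
      _ ≤ K₁ * (C₀ * (n:ℝ) ^ (s + 1)) := by
          apply mul_le_mul_of_nonneg_left (hsum n hn) hK₁.le
      _ = K₁ * C₀ * (n:ℝ) ^ (s + 1) := by ring
  have hlam4 : (lam n) ^ 4 ≤ d₂ ^ 2 * (n:ℝ) ^ (-(2 * β)) := by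
    have h1 : (lam n) ^ 4 = ((lam n) ^ 2) ^ 2 := by ring
    have h2 : ((lam n) ^ 2) ^ 2 ≤ (d₂ * (n:ℝ) ^ (-β)) ^ 2 :=
      pow_le_pow_left₀ (hlamsq n).le (hlam n hn).2 2
    rw [h1]
    calc ((lam n) ^ 2) ^ 2 ≤ (d₂ * (n:ℝ) ^ (-β)) ^ 2 := h2
      _ = d₂ ^ 2 * ((n:ℝ) ^ (-β) * (n:ℝ) ^ (-β)) := by ring
      _ = d₂ ^ 2 * (n:ℝ) ^ (-(2 * β)) := by
          rw [← Real.rpow_add hn0]; ring_nf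
  have hLHS : (lam n) ^ 4 * ∑ k ∈ Icc 1 n, ((lam k) ^ 2)⁻¹ * w k * e k
      ≤ d₂ ^ 2 * K₁ * C₀ * (n:ℝ) ^ (t + 1) := by
    calc (lam n) ^ 4 * ∑ k ∈ Icc 1 n, ((lam k) ^ 2)⁻¹ * w k * e k
        ≤ (d₂ ^ 2 * (n:ℝ) ^ (-(2 * β))) * (K₁ * C₀ * (n:ℝ) ^ (s + 1)) :=
          mul_le_mul hlam4 hS hSnonneg (by positivity)
      _ = d₂ ^ 2 * K₁ * C₀ * ((n:ℝ) ^ (-(2 * β)) * (n:ℝ) ^ (s + 1)) := by ring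
      _ = d₂ ^ 2 * K₁ * C₀ * (n:ℝ) ^ (t + 1) := by
          rw [← Real.rpow_add hn0, ht_def]; ring_nf
  -- the tail
  set f : ℕ → ℝ := fun k => (lam (n + 1 + k)) ^ 2 * w (n + 1 + k) * e (n + 1 + k) with hf_def
  have hidx : ∀ k : ℕ, 1 ≤ n + 1 + k := fun k => by omega
  have hidx0 : ∀ k : ℕ, (0:ℝ) < ((n + 1 + k : ℕ) : ℝ) := fun k => by
    exact_mod_cast Nat.lt_of_lt_of_le Nat.zero_lt_one (hidx k)
  have hf_nonneg : ∀ k, 0 ≤ f k := by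
    intro k
    have := hlamsq (n + 1 + k)
    have := hwpos (n + 1 + k) (hidx k)
    have := hepos (n + 1 + k) (hidx k)
    positivity
  have hprod : ∀ k : ℕ, ((n+1+k:ℕ):ℝ) ^ (-β) * ((n+1+k:ℕ):ℝ) ^ (-(2 * γ * β)) *
      ((n+1+k:ℕ):ℝ) ^ (-α) = ((n+1+k:ℕ):ℝ) ^ t := by
    intro k
    rw [← Real.rpow_add (hidx0 k), ← Real.rpow_add (hidx0 k), ht_def, hs_def]
    ring_nf
  have hf_ge : ∀ k, K₂ * ((n+1+k:ℕ):ℝ) ^ t ≤ f k := by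
    intro k
    have h1 := (hlam (n+1+k) (hidx k)).1
    have h2 := (hw (n+1+k) (hidx k)).1
    have h3 := (he (n+1+k) (hidx k)).1
    calc K₂ * ((n+1+k:ℕ):ℝ) ^ t
        = d₁ * ((n+1+k:ℕ):ℝ) ^ (-β) * (b₁ * ((n+1+k:ℕ):ℝ) ^ (-(2 * γ * β))) *
            (c₁ * ((n+1+k:ℕ):ℝ) ^ (-α)) := by rw [hK₂_def, ← hprod k]; ring
      _ ≤ f k := by
          apply mul_le_mul (mul_le_mul h1 h2 (by positivity) (hlamsq _).le) h3
            (by positivity) (mul_nonneg (hlamsq _).le (hwpos _ (hidx k)).le)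
  have hf_le : ∀ k, f k ≤ (d₂ * b₂ * c₂) * ((n+1+k:ℕ):ℝ) ^ t := by
    intro k
    have h1 := (hlam (n+1+k) (hidx k)).2
    have h2 := (hw (n+1+k) (hidx k)).2
    have h3 := (he (n+1+k) (hidx k)).2
    calc f k ≤ d₂ * ((n+1+k:ℕ):ℝ) ^ (-β) * (b₂ * ((n+1+k:ℕ):ℝ) ^ (-(2 * γ * β))) *
            (c₂ * ((n+1+k:ℕ):ℝ) ^ (-α)) := by
          apply mul_le_mul (mul_le_mul h1 h2 (hwpos _ (hidx k)).le (by positivity)) h3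
            (hepos _ (hidx k)).le (by positivity)
      _ = (d₂ * b₂ * c₂) * ((n+1+k:ℕ):ℝ) ^ t := by rw [← hprod k]; ring
  have hsummable_t : Summable (fun k : ℕ => ((n+1+k:ℕ):ℝ) ^ t) := by
    have base : Summable (fun m : ℕ => (m:ℝ) ^ t) := Real.summable_nat_rpow.2 ht
    have := (summable_nat_add_iff (f := fun m : ℕ => (m:ℝ) ^ t) (n+1)).2 base
    apply this.congr
    intro k
    congr 2
    omega
  have hsummable : Summable f :=
    Summable.of_nonneg_of_le hf_nonneg hf_le (hsummable_t.mul_left _)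
  have hpartial : ∑ k ∈ Finset.range n, f k ≤ ∑' k, f k :=
    Summable.sum_le_tsum _ (fun k _ => hf_nonneg k) hsummable
  have hblock : K₂ * 2 ^ t * (n:ℝ) ^ (t + 1) ≤ ∑ k ∈ Finset.range n, f k := by
    have hterm2 : ∀ k ∈ Finset.range n, K₂ * (2 * (n:ℝ)) ^ t ≤ f k := by
      intro k hk
      have hkn : k < n := Finset.mem_range.mp hk
      refine le_trans ?_ (hf_ge k)
      apply mul_le_mul_of_nonneg_left _ hK₂.le
      apply Real.rpow_le_rpow_of_nonpos (hidx0 k) _ ht0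
      have : (n + 1 + k : ℕ) ≤ 2 * n := by omega
      calc ((n+1+k:ℕ):ℝ) ≤ ((2*n:ℕ):ℝ) := by exact_mod_cast this
        _ = 2 * (n:ℝ) := by push_cast; ring
    calc K₂ * 2 ^ t * (n:ℝ) ^ (t + 1)
        = (n:ℝ) * (K₂ * (2 * (n:ℝ)) ^ t) := by
          rw [Real.mul_rpow (by norm_num) hn0.le, Real.rpow_add hn0, Real.rpow_one]
          ring
      _ = ∑ k ∈ Finset.range n, K₂ * (2 * (n:ℝ)) ^ t := by
          rw [Finset.sum_const, Finset.card_range, nsmul_eq_mul]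
      _ ≤ ∑ k ∈ Finset.range n, f k := Finset.sum_le_sum hterm2
  have hT : K₂ * 2 ^ t * (n:ℝ) ^ (t + 1) ≤ ∑' k, f k := le_trans hblock hpartial
  calc (lam n) ^ 4 * ∑ k ∈ Icc 1 n, ((lam k) ^ 2)⁻¹ * w k * e k
      ≤ d₂ ^ 2 * K₁ * C₀ * (n:ℝ) ^ (t + 1) := hLHS
    _ = (d₂ ^ 2 * K₁ * C₀) / (K₂ * 2 ^ t) * (K₂ * 2 ^ t * (n:ℝ) ^ (t + 1)) := by
        field_simp
    _ ≤ (d₂ ^ 2 * K₁ * C₀) / (K₂ * 2 ^ t) * ∑' k, f k := by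
        apply mul_le_mul_of_nonneg_left hT (by positivity)
end

section
/- Let a ∈ (0,1), α > 1, and let (ξ_k) be i.i.d. standard Gaussian random variables. Let σ_k² ≍ k^{−α}. Then with probability 1, sup_{n ≥ 1} [ a^{2n} ∑_{k=1}^n a^{−k} σ_k² ξ_k² ] / [ ∑_{k=n+1}^∞ a^k σ_k² ξ_k² ] = +∞. -/
open MeasureTheory ProbabilityTheory Finset Real
open scoped ENNReal NNReal

lemma aux_prod_lower (q e : ℕ → ℝ) :
    ∀ L : ℕ, (∀ j, j < L → 0 ≤ e j ∧ e j ≤ 1 ∧ 1 - e j ≤ q j) →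
      1 - ∑ j ∈ range L, e j ≤ ∏ j ∈ range L, q j := by
  intro L
  induction L with
  | zero => simp
  | succ L ih =>
    intro h
    have hL := h L (Nat.lt_succ_self L)
    have ih' := ih fun j hj => h j (hj.trans (Nat.lt_succ_self L))
    have hqpos : ∀ j, j < L + 1 → 0 ≤ q j := fun j hj => by
      have := h j hj; linarith [this.1, this.2.1, this.2.2]
    have hprod0 : 0 ≤ ∏ j ∈ range L, q j :=
      Finset.prod_nonneg fun j hj => hqpos j ((Finset.mem_range.1 hj).trans (Nat.lt_succ_self L))
    have hsum0 : 0 ≤ ∑ j ∈ range L, e j :=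
      Finset.sum_nonneg fun j hj => (h j ((Finset.mem_range.1 hj).trans (Nat.lt_succ_self L))).1
    rw [Finset.sum_range_succ, Finset.prod_range_succ]
    rcases le_or_gt (1 - ∑ j ∈ range L, e j) 0 with h0 | h0
    · have : 1 - (∑ j ∈ range L, e j + e L) ≤ 0 := by linarith [hL.1]
      exact this.trans (mul_nonneg hprod0 (hqpos L (Nat.lt_succ_self L)))
    · have h1 : (1 - ∑ j ∈ range L, e j) * q L ≤ (∏ j ∈ range L, q j) * q L :=
        mul_le_mul_of_nonneg_right ih' (hqpos L (Nat.lt_succ_self L))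
      have h2 : (1 - ∑ j ∈ range L, e j) * (1 - e L) ≤ (1 - ∑ j ∈ range L, e j) * q L :=
        mul_le_mul_of_nonneg_left hL.2.2 h0.le
      nlinarith [hL.1, hsum0]

lemma gauss_sq_lt_top : ∫⁻ x, ENNReal.ofReal (x ^ 2) ∂(gaussianReal 0 1) < ⊤ := by
  rw [gaussianReal_of_var_ne_zero _ one_ne_zero,
    lintegral_withDensity_eq_lintegral_mul _ (measurable_gaussianPDF 0 1)
      (measurable_id'.pow_const 2).ennreal_ofReal]
  have hb : Integrable (fun x : ℝ => 4 * Real.exp (-(4 : ℝ)⁻¹ * x ^ 2)) :=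
    (integrable_exp_neg_mul_sq (by norm_num)).const_mul 4
  have hbnn : (0:ℝ → ℝ) ≤ᵐ[volume] fun x : ℝ => 4 * Real.exp (-(4 : ℝ)⁻¹ * x ^ 2) := by
    refine Filter.Eventually.of_forall fun x => by positivity
  calc ∫⁻ x, (gaussianPDF 0 1 * fun x => ENNReal.ofReal (x ^ 2)) x
      ≤ ∫⁻ x, ENNReal.ofReal (4 * Real.exp (-(4:ℝ)⁻¹ * x ^ 2)) := by
        apply lintegral_mono
        intro x
        simp only [Pi.mul_apply, gaussianPDF]
        rw [← ENNReal.ofReal_mul (gaussianPDFReal_nonneg _ _ _)]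
        apply ENNReal.ofReal_le_ofReal
        have hpdf : gaussianPDFReal 0 1 x = (Real.sqrt (2 * π))⁻¹ * Real.exp (-x^2 / 2) := by
          simp [gaussianPDFReal]
        rw [hpdf]
        have h1 : (Real.sqrt (2 * π))⁻¹ ≤ 1 := by
          rw [inv_le_one_iff₀]
          right
          rw [Real.one_le_sqrt]
          · linarith [Real.pi_gt_three]
        have hexp : Real.exp (-x^2/2) = Real.exp (-x^2/4) * Real.exp (-x^2/4) := by
          rw [← Real.exp_add]; ring_nf
        have h2 : x^2 * Real.exp (-x^2/4) ≤ 4 := by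
          have := Real.add_one_le_exp (x^2/4)
          have hepos := Real.exp_pos (x^2/4)
          have hid : Real.exp (-x^2/4) = (Real.exp (x^2/4))⁻¹ := by
            rw [← Real.exp_neg]; ring_nf
          rw [hid]
          calc x^2 * (Real.exp (x^2/4))⁻¹ ≤ (4 * (x^2/4 + 1)) * (Real.exp (x^2/4))⁻¹ := by
                apply mul_le_mul_of_nonneg_right (by linarith) (by positivity)
            _ ≤ 4 := by
                rw [mul_inv_le_iff₀ hepos]
                nlinarith [this]
        have hexp4 : Real.exp (-(4:ℝ)⁻¹ * x^2) = Real.exp (-x^2/4) := by ring_nf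
        rw [hexp4]
        calc (Real.sqrt (2*π))⁻¹ * Real.exp (-x^2/2) * x^2
            ≤ 1 * Real.exp (-x^2/2) * x^2 := by
              apply mul_le_mul_of_nonneg_right (mul_le_mul_of_nonneg_right h1 (Real.exp_pos _).le) (sq_nonneg x)
          _ = (x^2 * Real.exp (-x^2/4)) * Real.exp (-x^2/4) := by rw [hexp]; ring
          _ ≤ 4 * Real.exp (-x^2/4) := mul_le_mul_of_nonneg_right h2 (Real.exp_pos _).le
    _ < ⊤ := by
        rw [← hasFiniteIntegral_iff_ofReal hbnn]
        exact hb.hasFiniteIntegral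

lemma gauss_pos (θ : ℝ) : 0 < gaussianReal 0 1 {x | θ < x ^ 2} := by
  set t := Real.sqrt (max θ 0) + 1 with ht
  have htpos : 0 < t := by positivity
  have hsub : Set.Ioi t ⊆ {x : ℝ | θ < x ^ 2} := by
    intro x hx
    simp only [Set.mem_Ioi] at hx
    have h1 : t ^ 2 ≤ x ^ 2 := by nlinarith
    have h2 : max θ 0 < t ^ 2 := by
      have := Real.sq_sqrt (le_max_right θ 0)
      nlinarith [Real.sqrt_nonneg (max θ 0)]
    calc θ ≤ max θ 0 := le_max_left θ 0
      _ < t ^ 2 := h2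
      _ ≤ x ^ 2 := h1
  refine lt_of_lt_of_le ?_ (measure_mono hsub)
  rw [gaussianReal_of_var_ne_zero _ one_ne_zero, withDensity_apply _ measurableSet_Ioi]
  rw [lintegral_pos_iff_support (measurable_gaussianPDF 0 1)]
  have hsupp : Function.support (gaussianPDF 0 1) = Set.univ :=
    Set.eq_univ_of_forall fun x => (gaussianPDF_pos 0 one_ne_zero x).ne'
  rw [hsupp, Measure.restrict_apply_univ, Real.volume_Ioi]
  exact ENNReal.zero_lt_top

lemma measSet_mono {Ω : Type*} {m₁ m₂ : MeasurableSpace Ω} (h : m₁ ≤ m₂) {s : Set Ω}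
    (hs : MeasurableSet[m₁] s) : MeasurableSet[m₂] s := h _ hs

set_option maxHeartbeats 1000000 in
/-- Severely ill-posed case with i.i.d. standard Gaussian noise: the Muckenhoupt-type
noise condition fails almost surely (the sup of the ratios is infinite). -/
theorem stmt_6
    {Ω : Type*} [MeasurableSpace Ω] {μ : Measure Ω} [IsProbabilityMeasure μ]
    (a α : ℝ) (ha : 0 < a) (ha1 : a < 1) (hα : 1 < α)
    (ξ : ℕ → Ω → ℝ)
    (hmeas : ∀ k, Measurable (ξ k))
    (hindep : iIndepFun ξ μ)
    (hgauss : ∀ k, μ.map (ξ k) = gaussianReal 0 1)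
    (σ2 : ℕ → ℝ) (c₁ c₂ : ℝ) (hc₁ : 0 < c₁) (hc₂ : 0 < c₂)
    (hσ : ∀ k : ℕ, 1 ≤ k → c₁ * (k : ℝ) ^ (-α) ≤ σ2 k ∧ σ2 k ≤ c₂ * (k : ℝ) ^ (-α)) :
    ∀ᵐ ω ∂μ, ∀ C : ℝ, ∃ n : ℕ, 1 ≤ n ∧
      C * ∑' k : ℕ, a ^ (n + 1 + k) * σ2 (n + 1 + k) * (ξ (n + 1 + k) ω) ^ 2
        < a ^ (2 * n) * ∑ k ∈ Icc 1 n, (a ^ k)⁻¹ * σ2 k * (ξ k ω) ^ 2 := by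
  classical
  set g : Measure ℝ := gaussianReal 0 1 with hgdef
  -- constants
  set r : ℝ := Real.sqrt a with hrdef
  have hr0 : 0 < r := Real.sqrt_pos.2 ha
  have hr1 : r < 1 := by
    rw [hrdef, show (1 : ℝ) = Real.sqrt 1 by simp]
    exact Real.sqrt_lt_sqrt ha.le ha1
  have hrr : r * r = a := Real.mul_self_sqrt ha.le
  set b : ℝ := (1 + a⁻¹) / 2 with hbdef
  have hainv : 1 < a⁻¹ := (one_lt_inv₀ ha).2 ha1
  have hb1 : 1 < b := by rw [hbdef]; linarith
  have hb0 : 0 < b := lt_trans one_pos hb1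
  have hab : a * b < 1 := by
    rw [hbdef]
    have : a * ((1 + a⁻¹) / 2) = (a + 1) / 2 := by field_simp
    rw [this]; linarith
  have hab0 : 0 < a * b := mul_pos ha hb0
  have hbinv : 0 < 1 - b⁻¹ := by
    have : b⁻¹ < 1 := inv_lt_one_of_one_lt₀ hb1
    linarith
  set V : ℝ≥0∞ := ∫⁻ x, ENNReal.ofReal (x ^ 2) ∂g with hVdef
  have hV : V < ⊤ := gauss_sq_lt_top
  set Vr : ℝ := V.toReal with hVrdef
  have hVr0 : 0 ≤ Vr := ENNReal.toReal_nonneg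
  set c : ℝ := (2 * Vr + 1) / (1 - b⁻¹) with hcdef
  have hc0 : 0 < c := div_pos (by linarith) hbinv
  -- preimage measure
  have hsqmeas : Measurable fun x : ℝ => x ^ 2 := measurable_id'.pow_const 2
  have hmap : ∀ (k : ℕ) (s : Set ℝ), MeasurableSet s → μ (ξ k ⁻¹' s) = g s := by
    intro k s hs
    rw [← hgauss k, Measure.map_apply (hmeas k) hs]
  -- sets
  set Tset : ℕ → Set ℝ := fun j => {x : ℝ | x ^ 2 < c * b ^ j} with hTdef
  have hTmeas : ∀ j, MeasurableSet (Tset j) := fun j => hsqmeas measurableSet_Iio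
  set Sset : ℝ → Set ℝ := fun θ => {x : ℝ | θ < x ^ 2} with hSdef
  have hSmeas : ∀ θ, MeasurableSet (Sset θ) := fun θ => hsqmeas measurableSet_Ioi
  set tset : ℝ → ℕ → ℕ → Set ℝ :=
    fun θ i m => if m = 2 ^ i then Sset θ else Tset (m - (2 ^ i + 1)) with htsetdef
  have htsetmeas : ∀ θ i m, MeasurableSet (tset θ i m) := by
    intro θ i m
    rw [htsetdef]
    dsimp only
    split
    · exact hSmeas θ
    · exact hTmeas _
  set A : ℝ → ℕ → Set Ω :=
    fun θ i => ⋂ m ∈ Finset.Ico (2 ^ i) (2 ^ i * 2), ξ m ⁻¹' tset θ i m with hAdef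
  have hAmeas : ∀ θ i, MeasurableSet (A θ i) := fun θ i =>
    Finset.measurableSet_biInter _ fun m _ => (hmeas m) (htsetmeas θ i m)
  -- Markov bound for window sets
  have hq : ∀ j : ℕ, 1 - Vr / (c * b ^ j) ≤ (g (Tset j)).toReal := by
    intro j
    have hpos : 0 < c * b ^ j := mul_pos hc0 (pow_pos hb0 j)
    have h1 := mul_meas_ge_le_lintegral₀ (μ := g)
      (hsqmeas.ennreal_ofReal.aemeasurable) (ENNReal.ofReal (c * b ^ j))
    have hsets : {x : ℝ | ENNReal.ofReal (c * b ^ j) ≤ ENNReal.ofReal (x ^ 2)} = (Tset j)ᶜ := by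
      ext x
      simp only [Set.mem_setOf_eq, hTdef, Set.mem_compl_iff, not_lt]
      rw [ENNReal.ofReal_le_ofReal_iff (sq_nonneg x)]
    rw [hsets] at h1
    have hmarkov : g ((Tset j)ᶜ) ≤ V / ENNReal.ofReal (c * b ^ j) := by
      rw [ENNReal.le_div_iff_mul_le (Or.inl (ENNReal.ofReal_pos.2 hpos).ne')
        (Or.inl ENNReal.ofReal_ne_top), mul_comm]
      exact h1
    have hfin : V / ENNReal.ofReal (c * b ^ j) ≠ ⊤ :=
      (ENNReal.div_lt_top hV.ne (ENNReal.ofReal_pos.2 hpos).ne').ne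
    have h2 : (g ((Tset j)ᶜ)).toReal ≤ Vr / (c * b ^ j) := by
      have h3 := ENNReal.toReal_mono hfin hmarkov
      rwa [ENNReal.toReal_div, ENNReal.toReal_ofReal hpos.le] at h3
    have h4 : (g ((Tset j)ᶜ)).toReal = 1 - (g (Tset j)).toReal := by
      rw [prob_compl_eq_one_sub (hTmeas j),
        ENNReal.toReal_sub_of_le prob_le_one ENNReal.one_ne_top, ENNReal.toReal_one]
    linarith
  have hqsum : ∀ L : ℕ, ∑ j ∈ range L, Vr / (c * b ^ j) ≤ 1 / 2 := by
    intro L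
    have hbi0 : 0 ≤ b⁻¹ := inv_nonneg.2 hb0.le
    have hbi1 : b⁻¹ < 1 := inv_lt_one_of_one_lt₀ hb1
    have h1 : ∀ j : ℕ, Vr / (c * b ^ j) = (Vr / c) * (b⁻¹) ^ j := by
      intro j
      rw [inv_pow, ← div_eq_mul_inv, div_div]
    have hgeo : ∑ j ∈ range L, (b⁻¹) ^ j ≤ (1 - b⁻¹)⁻¹ := by
      calc ∑ j ∈ range L, (b⁻¹) ^ j ≤ ∑' j : ℕ, (b⁻¹) ^ j :=
            Summable.sum_le_tsum (range L) (fun j _ => pow_nonneg hbi0 j)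
              (summable_geometric_of_lt_one hbi0 hbi1)
        _ = (1 - b⁻¹)⁻¹ := tsum_geometric_of_lt_one hbi0 hbi1
    have hfinal : (Vr / c) * (1 - b⁻¹)⁻¹ ≤ 1 / 2 := by
      have hceq : Vr / c * (1 - b⁻¹)⁻¹ = Vr / (2 * Vr + 1) := by
        have h7 : b - 1 ≠ 0 := sub_ne_zero.mpr hb1.ne'
        have h9 : (2 * Vr + 1) ≠ 0 := by positivity
        rw [hcdef]
        field_simp [hb0.ne', h7, h9]
      rw [hceq, div_le_iff₀ (by linarith)]
      linarith
    calc ∑ j ∈ range L, Vr / (c * b ^ j) = ∑ j ∈ range L, (Vr / c) * (b⁻¹) ^ j :=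
          Finset.sum_congr rfl fun j _ => h1 j
      _ = (Vr / c) * ∑ j ∈ range L, (b⁻¹) ^ j := by rw [Finset.mul_sum]
      _ ≤ (Vr / c) * (1 - b⁻¹)⁻¹ :=
          mul_le_mul_of_nonneg_left hgeo (div_nonneg hVr0 hc0.le)
      _ ≤ 1 / 2 := hfinal
  -- lower bound on the probability of A θ i
  have hAlower : ∀ θ i, ENNReal.ofReal ((g (Sset θ)).toReal / 2) ≤ μ (A θ i) := by
    intro θ i
    have hN1 : 1 ≤ 2 ^ i := Nat.one_le_two_pow
    have hAprod : μ (A θ i) = ∏ m ∈ Finset.Ico (2 ^ i) (2 ^ i * 2), g (tset θ i m) := by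
      rw [hAdef]
      dsimp only
      rw [hindep.measure_inter_preimage_eq_mul (Finset.Ico (2 ^ i) (2 ^ i * 2))
        (fun m _ => htsetmeas θ i m)]
      exact Finset.prod_congr rfl fun m _ => hmap m _ (htsetmeas θ i m)
    have hreindex : ∏ m ∈ Finset.Ico (2 ^ i) (2 ^ i * 2), g (tset θ i m)
        = (∏ k ∈ range (2 ^ i - 1), g (Tset k)) * g (Sset θ) := by
      rw [Finset.prod_Ico_eq_prod_range]
      have h2 : 2 ^ i * 2 - 2 ^ i = (2 ^ i - 1) + 1 := by omega
      rw [h2, Finset.prod_range_succ']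
      congr 1
      · refine Finset.prod_congr rfl fun k _ => ?_
        have h3 : tset θ i (2 ^ i + (k + 1)) = Tset k := by
          rw [htsetdef]
          dsimp only
          rw [if_neg (by omega)]
          have harg : 2 ^ i + (k + 1) - (2 ^ i + 1) = k := by omega
          rw [harg]
        rw [h3]
      · have h4 : tset θ i (2 ^ i + 0) = Sset θ := by
          rw [htsetdef]
          dsimp only
          rw [if_pos (by omega)]
        rw [h4]
    have htoReal : (μ (A θ i)).toReal
        = (∏ k ∈ range (2 ^ i - 1), (g (Tset k)).toReal) * (g (Sset θ)).toReal := by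
      rw [hAprod, hreindex, ENNReal.toReal_mul, ENNReal.toReal_prod]
    have hhalf : 1 / 2 ≤ ∏ k ∈ range (2 ^ i - 1), (g (Tset k)).toReal := by
      have hcond : ∀ j, j < 2 ^ i - 1 → 0 ≤ Vr / (c * b ^ j) ∧ Vr / (c * b ^ j) ≤ 1 ∧
          1 - Vr / (c * b ^ j) ≤ (g (Tset j)).toReal := by
        intro j hj
        have h1 : Vr / (c * b ^ j) ≤ ∑ j' ∈ range (2 ^ i - 1), Vr / (c * b ^ j') :=
          Finset.single_le_sum
            (fun j' _ => div_nonneg hVr0 (mul_pos hc0 (pow_pos hb0 j')).le)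
            (mem_range.2 hj)
        have h2 := hqsum (2 ^ i - 1)
        exact ⟨div_nonneg hVr0 (mul_pos hc0 (pow_pos hb0 j)).le, by linarith, hq j⟩
      have haux := aux_prod_lower _ _ (2 ^ i - 1) hcond
      have h2 := hqsum (2 ^ i - 1)
      linarith
    rw [← ENNReal.ofReal_toReal (measure_ne_top μ (A θ i))]
    apply ENNReal.ofReal_le_ofReal
    rw [htoReal]
    have hp0 : (0:ℝ) ≤ (g (Sset θ)).toReal := ENNReal.toReal_nonneg
    nlinarith [mul_le_mul_of_nonneg_right hhalf hp0]
  -- almost surely, some A θ i occurs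
  have hUnion : ∀ θ : ℝ, ∀ᵐ ω ∂μ, ∃ i, ω ∈ A θ i := by
    intro θ
    have hgp : 0 < g (Sset θ) := gauss_pos θ
    have hp0 : 0 < (g (Sset θ)).toReal :=
      ENNReal.toReal_pos hgp.ne' (measure_ne_top g _)
    set qq : ℝ≥0∞ := ENNReal.ofReal ((g (Sset θ)).toReal / 2) with hqqdef
    have hq0 : qq ≠ 0 := by
      rw [hqqdef]
      simp only [ne_eq, ENNReal.ofReal_eq_zero, not_le]
      linarith
    set ρ : ℝ≥0∞ := 1 - qq with hρdef
    have hρ1 : ρ < 1 := ENNReal.sub_lt_self ENNReal.one_ne_top one_ne_zero hq0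
    have hAc : ∀ i, μ ((A θ i)ᶜ) ≤ ρ := by
      intro i
      rw [prob_compl_eq_one_sub (hAmeas θ i), hρdef]
      exact tsub_le_tsub_left (hAlower θ i) 1
    have hle : ∀ k : ℕ, MeasurableSpace.comap (ξ k) inferInstance ≤ _ :=
      fun k => (hmeas k).comap_le
    have hiIndep : iIndep (fun k => MeasurableSpace.comap (ξ k) inferInstance) μ :=
      hindep.iIndep
    have hmeasSup : ∀ (u : Set ℕ) (i : ℕ), (∀ m, 2 ^ i ≤ m → m < 2 ^ i * 2 → m ∈ u) →
        MeasurableSet[⨆ n ∈ u, MeasurableSpace.comap (ξ n) inferInstance] (A θ i) := by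
      intro u i hu
      rw [hAdef]
      dsimp only
      refine Finset.measurableSet_biInter _ fun m hm => ?_
      have hmu : m ∈ u := hu m (Finset.mem_Ico.1 hm).1 (Finset.mem_Ico.1 hm).2
      have h1 : MeasurableSet[MeasurableSpace.comap (ξ m) inferInstance]
          (ξ m ⁻¹' tset θ i m) := ⟨tset θ i m, htsetmeas θ i m, rfl⟩
      exact measSet_mono
        (le_biSup (fun n => MeasurableSpace.comap (ξ n) inferInstance) hmu) h1
    have hInterBound : ∀ N : ℕ, μ (⋂ l ∈ Finset.range N, (A θ l)ᶜ) ≤ ρ ^ N := by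
      intro N
      induction N with
      | zero => simp
      | succ N ih =>
        have hsplit : (⋂ l ∈ Finset.range (N + 1), (A θ l)ᶜ)
            = (A θ N)ᶜ ∩ ⋂ l ∈ Finset.range N, (A θ l)ᶜ := by
          rw [Finset.range_add_one, Finset.set_biInter_insert]
        rw [hsplit]
        set t : Set ℕ := {m | 2 ^ N ≤ m} with htdef
        have hindep2 := indep_biSup_compl hle hiIndep t
        have hA_t : MeasurableSet[⨆ n ∈ t, MeasurableSpace.comap (ξ n) inferInstance]
            ((A θ N)ᶜ) :=
          (hmeasSup t N fun m hm _ => hm).compl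
        have hF_t : MeasurableSet[⨆ n ∈ tᶜ, MeasurableSpace.comap (ξ n) inferInstance]
            (⋂ l ∈ Finset.range N, (A θ l)ᶜ) := by
          refine Finset.measurableSet_biInter _ fun l hl => ?_
          have hlN : l < N := Finset.mem_range.1 hl
          refine (hmeasSup tᶜ l fun m hm1 hm2 => ?_).compl
          simp only [htdef, Set.mem_compl_iff, Set.mem_setOf_eq, not_le]
          have h2 : 2 ^ (l + 1) ≤ 2 ^ N := Nat.pow_le_pow_right (by norm_num) hlN
          have h3 : 2 ^ l * 2 ≤ 2 ^ N := by
            rw [← pow_succ]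
            exact h2
          omega
        have hmul := (Indep_iff _ _ μ).1 hindep2 _ _ hA_t hF_t
        rw [hmul]
        calc μ ((A θ N)ᶜ) * μ (⋂ l ∈ Finset.range N, (A θ l)ᶜ) ≤ ρ * ρ ^ N :=
              mul_le_mul' (hAc N) ih
          _ = ρ ^ (N + 1) := by rw [pow_succ, mul_comm]
    have hInter0 : μ (⋂ l : ℕ, (A θ l)ᶜ) = 0 := by
      have hle' : ∀ N : ℕ, μ (⋂ l : ℕ, (A θ l)ᶜ) ≤ ρ ^ N := by
        intro N
        refine le_trans (measure_mono ?_) (hInterBound N)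
        intro ω hω
        simp only [Set.mem_iInter] at hω ⊢
        intro l _
        exact hω l
      have htend := ENNReal.tendsto_pow_atTop_nhds_zero_of_lt_one hρ1
      exact le_antisymm (ge_of_tendsto' htend hle') zero_le
    rw [ae_iff]
    have heq : {ω | ¬∃ i, ω ∈ A θ i} = ⋂ l : ℕ, (A θ l)ᶜ := by
      ext ω
      simp
    rw [heq]
    exact hInter0
  -- almost sure geometric bound on the noise
  have hSr : ∀ᵐ ω ∂μ, (∑' m, ENNReal.ofReal (r ^ m * (ξ m ω) ^ 2)) < ⊤ := by
    have hmeasm : ∀ m : ℕ, Measurable fun ω => ENNReal.ofReal (r ^ m * (ξ m ω) ^ 2) :=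
      fun m => (((hmeas m).pow_const 2).const_mul _).ennreal_ofReal
    have hSr_meas : Measurable fun ω => ∑' m, ENNReal.ofReal (r ^ m * (ξ m ω) ^ 2) :=
      Measurable.ennreal_tsum hmeasm
    have hterm : ∀ m : ℕ, ∫⁻ ω, ENNReal.ofReal (r ^ m * (ξ m ω) ^ 2) ∂μ
        = ENNReal.ofReal (r ^ m) * V := by
      intro m
      have h1 : (fun ω => ENNReal.ofReal (r ^ m * (ξ m ω) ^ 2))
          = fun ω => ENNReal.ofReal (r ^ m) * ENNReal.ofReal ((ξ m ω) ^ 2) := by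
        funext ω
        rw [ENNReal.ofReal_mul (pow_nonneg hr0.le m)]
      rw [h1, lintegral_const_mul _ ((hmeas m).pow_const 2).ennreal_ofReal]
      congr 1
      calc ∫⁻ ω, ENNReal.ofReal ((ξ m ω) ^ 2) ∂μ
          = ∫⁻ x, ENNReal.ofReal (x ^ 2) ∂(μ.map (ξ m)) :=
            (lintegral_map hsqmeas.ennreal_ofReal (hmeas m)).symm
        _ = V := by rw [hgauss m]
    have hlint : ∫⁻ ω, (∑' m, ENNReal.ofReal (r ^ m * (ξ m ω) ^ 2)) ∂μ ≠ ⊤ := by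
      rw [lintegral_tsum fun m => (hmeasm m).aemeasurable]
      have h2 : ∑' m : ℕ, ∫⁻ ω, ENNReal.ofReal (r ^ m * (ξ m ω) ^ 2) ∂μ
          = (∑' m : ℕ, ENNReal.ofReal (r ^ m)) * V := by
        rw [← ENNReal.tsum_mul_right]
        exact tsum_congr hterm
      rw [h2]
      have h3 : ∑' m : ℕ, ENNReal.ofReal (r ^ m) = (1 - ENNReal.ofReal r)⁻¹ := by
        have h4 : ∀ m : ℕ, ENNReal.ofReal (r ^ m) = (ENNReal.ofReal r) ^ m :=
          fun m => ENNReal.ofReal_pow hr0.le m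
        rw [tsum_congr h4]
        exact ENNReal.tsum_geometric _
      rw [h3]
      refine ENNReal.mul_ne_top (ENNReal.inv_ne_top.2 ?_) hV.ne
      have h5 : ENNReal.ofReal r < 1 := ENNReal.ofReal_lt_one.2 hr1
      exact (tsub_pos_of_lt h5).ne'
    exact ae_lt_top hSr_meas hlint
  -- constants for the final bound
  set K : ℕ → ℝ := fun s => a * c * (1 - a * b)⁻¹ + s * (1 - r)⁻¹ with hKdef
  set θf : ℕ → ℕ → ℝ := fun M s => (M * c₂ * K s) / c₁ with hθfdef
  have hU : ∀ᵐ ω ∂μ, ∀ Ms : ℕ × ℕ, ∃ i, ω ∈ A (θf Ms.1 Ms.2) i :=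
    ae_all_iff.2 fun Ms => hUnion (θf Ms.1 Ms.2)
  filter_upwards [hSr, hU] with ω hSrω hUω
  intro C
  set B : ℝ := (∑' m, ENNReal.ofReal (r ^ m * (ξ m ω) ^ 2)).toReal with hBdef
  have hB0 : 0 ≤ B := ENNReal.toReal_nonneg
  have hξB : ∀ m, r ^ m * (ξ m ω) ^ 2 ≤ B := by
    intro m
    rw [hBdef]
    exact (ENNReal.ofReal_le_iff_le_toReal hSrω.ne).1 (ENNReal.le_tsum m)
  obtain ⟨M, hM⟩ := exists_nat_ge C
  set s : ℕ := Nat.ceil B with hsdef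
  have hsB : B ≤ s := Nat.le_ceil B
  obtain ⟨i, hi⟩ := hUω (M, s)
  set n : ℕ := 2 ^ i with hndef
  have hn1 : 1 ≤ n := Nat.one_le_two_pow
  have hn1R : (1 : ℝ) ≤ (n : ℝ) := by exact_mod_cast hn1
  refine ⟨n, hn1, ?_⟩
  -- unpack event membership
  rw [hAdef] at hi
  simp only [Set.mem_iInter] at hi
  have hbig : θf M s < (ξ n ω) ^ 2 := by
    have hmem : n ∈ Finset.Ico (2 ^ i) (2 ^ i * 2) := by
      rw [Finset.mem_Ico]
      constructor
      · exact le_of_eq hndef.symm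
      · rw [← hndef]; omega
    have h := hi n hmem
    rw [htsetdef] at h
    simp only [← hndef, if_pos rfl] at h
    rw [hSdef] at h
    exact h
  have hwin : ∀ k, k < n - 1 → (ξ (n + 1 + k) ω) ^ 2 < c * b ^ k := by
    intro k hk
    have hmem : n + 1 + k ∈ Finset.Ico (2 ^ i) (2 ^ i * 2) := by
      rw [Finset.mem_Ico, ← hndef]
      omega
    have h := hi (n + 1 + k) hmem
    rw [htsetdef] at h
    simp only [← hndef] at h
    rw [if_neg (by omega)] at h
    have hsub : n + 1 + k - (n + 1) = k := by omega
    rw [hsub, hTdef] at h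
    exact h
  -- positivity facts
  have han : 0 < a ^ n := pow_pos ha n
  have hnα : 0 < (n : ℝ) ^ (-α) := Real.rpow_pos_of_pos (by linarith) _
  have hσpos : ∀ m : ℕ, 1 ≤ m → 0 < σ2 m := fun m hm =>
    lt_of_lt_of_le (mul_pos hc₁ (Real.rpow_pos_of_pos (by exact_mod_cast hm) _)) (hσ m hm).1
  have hσle : ∀ m : ℕ, n ≤ m → σ2 m ≤ c₂ * (n : ℝ) ^ (-α) := by
    intro m hm
    have hm1 : 1 ≤ m := le_trans hn1 hm
    refine (hσ m hm1).2.trans ?_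
    have h1 : (m : ℝ) ^ (-α) ≤ (n : ℝ) ^ (-α) := by
      rw [Real.rpow_neg (Nat.cast_nonneg m), Real.rpow_neg (Nat.cast_nonneg n)]
      refine inv_anti₀ (Real.rpow_pos_of_pos (by linarith) α) ?_
      exact Real.rpow_le_rpow (Nat.cast_nonneg n) (by exact_mod_cast hm) (by linarith)
    exact mul_le_mul_of_nonneg_left h1 hc₂.le
  -- the geometric bound pointwise
  have hξB' : ∀ m, (ξ m ω) ^ 2 ≤ B / r ^ m := by
    intro m
    rw [le_div_iff₀ (pow_pos hr0 m)]
    calc (ξ m ω) ^ 2 * r ^ m = r ^ m * (ξ m ω) ^ 2 := by ring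
      _ ≤ B := hξB m
  have hapow : ∀ m : ℕ, a ^ m = r ^ m * r ^ m := fun m => by
    rw [← mul_pow, hrr]
  have hwle : ∀ k, a ^ (n + 1 + k) * (ξ (n + 1 + k) ω) ^ 2 ≤ B * r ^ (n + 1 + k) := by
    intro k
    calc a ^ (n + 1 + k) * (ξ (n + 1 + k) ω) ^ 2
        ≤ a ^ (n + 1 + k) * (B / r ^ (n + 1 + k)) :=
          mul_le_mul_of_nonneg_left (hξB' _) (pow_nonneg ha.le _)
      _ = B * r ^ (n + 1 + k) := by
          rw [hapow (n + 1 + k)]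
          field_simp
  have hw0 : ∀ k, 0 ≤ a ^ (n + 1 + k) * (ξ (n + 1 + k) ω) ^ 2 := fun k =>
    mul_nonneg (pow_nonneg ha.le _) (sq_nonneg _)
  have hgeomsum : Summable fun k : ℕ => B * r ^ (n + 1 + k) := by
    have : (fun k : ℕ => B * r ^ (n + 1 + k)) = fun k => (B * r ^ (n + 1)) * r ^ k := by
      funext k; rw [pow_add]; ring
    rw [this]
    exact (summable_geometric_of_lt_one hr0.le hr1).mul_left _
  have hwsum : Summable fun k : ℕ => a ^ (n + 1 + k) * (ξ (n + 1 + k) ω) ^ 2 :=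
    Summable.of_nonneg_of_le hw0 hwle hgeomsum
  -- summability of the target series
  have hu0 : ∀ k : ℕ, 0 ≤ a ^ (n + 1 + k) * σ2 (n + 1 + k) * (ξ (n + 1 + k) ω) ^ 2 := fun k =>
    mul_nonneg (mul_nonneg (pow_nonneg ha.le _) (hσpos _ (by omega)).le) (sq_nonneg _)
  have hule : ∀ k : ℕ, a ^ (n + 1 + k) * σ2 (n + 1 + k) * (ξ (n + 1 + k) ω) ^ 2
      ≤ (c₂ * (n : ℝ) ^ (-α)) * (a ^ (n + 1 + k) * (ξ (n + 1 + k) ω) ^ 2) := by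
    intro k
    have h1 := hσle (n + 1 + k) (by omega)
    calc a ^ (n + 1 + k) * σ2 (n + 1 + k) * (ξ (n + 1 + k) ω) ^ 2
        = σ2 (n + 1 + k) * (a ^ (n + 1 + k) * (ξ (n + 1 + k) ω) ^ 2) := by ring
      _ ≤ (c₂ * (n : ℝ) ^ (-α)) * (a ^ (n + 1 + k) * (ξ (n + 1 + k) ω) ^ 2) :=
          mul_le_mul_of_nonneg_right h1 (hw0 k)
  have husum : Summable fun k : ℕ => a ^ (n + 1 + k) * σ2 (n + 1 + k) * (ξ (n + 1 + k) ω) ^ 2 :=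
    Summable.of_nonneg_of_le hu0 hule (hwsum.mul_left _)
  have hT : ∑' k : ℕ, a ^ (n + 1 + k) * σ2 (n + 1 + k) * (ξ (n + 1 + k) ω) ^ 2
      ≤ (c₂ * (n : ℝ) ^ (-α)) * ∑' k : ℕ, a ^ (n + 1 + k) * (ξ (n + 1 + k) ω) ^ 2 := by
    calc ∑' k : ℕ, a ^ (n + 1 + k) * σ2 (n + 1 + k) * (ξ (n + 1 + k) ω) ^ 2
        ≤ ∑' k : ℕ, (c₂ * (n : ℝ) ^ (-α)) * (a ^ (n + 1 + k) * (ξ (n + 1 + k) ω) ^ 2) :=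
          Summable.tsum_le_tsum hule husum (hwsum.mul_left _)
      _ = (c₂ * (n : ℝ) ^ (-α)) * ∑' k : ℕ, a ^ (n + 1 + k) * (ξ (n + 1 + k) ω) ^ 2 :=
          tsum_mul_left
  -- bound the tail sum
  have hwtsum : ∑' k : ℕ, a ^ (n + 1 + k) * (ξ (n + 1 + k) ω) ^ 2 ≤ a ^ n * K s := by
    have hsplit := Summable.sum_add_tsum_nat_add
      (f := fun k : ℕ => a ^ (n + 1 + k) * (ξ (n + 1 + k) ω) ^ 2) (n - 1) hwsum
    have hwin_sum : ∑ k ∈ range (n - 1), a ^ (n + 1 + k) * (ξ (n + 1 + k) ω) ^ 2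
        ≤ a ^ n * (a * c * (1 - a * b)⁻¹) := by
      have h1 : ∀ k ∈ range (n - 1), a ^ (n + 1 + k) * (ξ (n + 1 + k) ω) ^ 2
          ≤ (a ^ (n + 1) * c) * (a * b) ^ k := by
        intro k hk
        have h2 := (hwin k (mem_range.1 hk)).le
        calc a ^ (n + 1 + k) * (ξ (n + 1 + k) ω) ^ 2
            ≤ a ^ (n + 1 + k) * (c * b ^ k) :=
              mul_le_mul_of_nonneg_left h2 (pow_nonneg ha.le _)
          _ = (a ^ (n + 1) * c) * (a * b) ^ k := by rw [pow_add, mul_pow]; ring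
      have hg1 : ∑ k ∈ range (n - 1), (a * b) ^ k ≤ (1 - a * b)⁻¹ := by
        calc ∑ k ∈ range (n - 1), (a * b) ^ k
            ≤ ∑' k : ℕ, (a * b) ^ k :=
              Summable.sum_le_tsum (range (n - 1)) (fun k _ => pow_nonneg hab0.le k)
                (summable_geometric_of_lt_one hab0.le hab)
          _ = (1 - a * b)⁻¹ := tsum_geometric_of_lt_one hab0.le hab
      calc ∑ k ∈ range (n - 1), a ^ (n + 1 + k) * (ξ (n + 1 + k) ω) ^ 2
          ≤ ∑ k ∈ range (n - 1), (a ^ (n + 1) * c) * (a * b) ^ k := Finset.sum_le_sum h1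
        _ = (a ^ (n + 1) * c) * ∑ k ∈ range (n - 1), (a * b) ^ k := by rw [Finset.mul_sum]
        _ ≤ (a ^ (n + 1) * c) * (1 - a * b)⁻¹ :=
            mul_le_mul_of_nonneg_left hg1 (by positivity)
        _ = a ^ n * (a * c * (1 - a * b)⁻¹) := by rw [pow_succ]; ring
    have hrem : ∑' k : ℕ, a ^ (n + 1 + (k + (n - 1))) * (ξ (n + 1 + (k + (n - 1))) ω) ^ 2
        ≤ a ^ n * ((s : ℝ) * (1 - r)⁻¹) := by
      have h1 : ∀ k : ℕ, a ^ (n + 1 + (k + (n - 1))) * (ξ (n + 1 + (k + (n - 1))) ω) ^ 2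
          ≤ (B * a ^ n) * r ^ k := by
        intro k
        have h2 := hwle (k + (n - 1))
        have hexp : n + 1 + (k + (n - 1)) = n + n + k := by omega
        rw [hexp] at h2 ⊢
        calc a ^ (n + n + k) * (ξ (n + n + k) ω) ^ 2 ≤ B * r ^ (n + n + k) := h2
          _ = (B * a ^ n) * r ^ k := by
              rw [pow_add, pow_add, hapow n]
              ring
      have hsummable1 : Summable
          (fun k : ℕ => a ^ (n + 1 + (k + (n - 1))) * (ξ (n + 1 + (k + (n - 1))) ω) ^ 2) :=
        (summable_nat_add_iff
          (f := fun k : ℕ => a ^ (n + 1 + k) * (ξ (n + 1 + k) ω) ^ 2) (n - 1)).2 hwsum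
      have hsummable2 : Summable (fun k : ℕ => (B * a ^ n) * r ^ k) :=
        (summable_geometric_of_lt_one hr0.le hr1).mul_left _
      have hrinv : (0:ℝ) ≤ (1 - r)⁻¹ := inv_nonneg.2 (by linarith)
      calc ∑' k : ℕ, a ^ (n + 1 + (k + (n - 1))) * (ξ (n + 1 + (k + (n - 1))) ω) ^ 2
          ≤ ∑' k : ℕ, (B * a ^ n) * r ^ k := Summable.tsum_le_tsum h1 hsummable1 hsummable2
        _ = (B * a ^ n) * (1 - r)⁻¹ := by
            rw [tsum_mul_left, tsum_geometric_of_lt_one hr0.le hr1]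
        _ = a ^ n * (B * (1 - r)⁻¹) := by ring
        _ ≤ a ^ n * ((s : ℝ) * (1 - r)⁻¹) :=
            mul_le_mul_of_nonneg_left (mul_le_mul_of_nonneg_right hsB hrinv) han.le
    have hKexp : a ^ n * K s
        = a ^ n * (a * c * (1 - a * b)⁻¹) + a ^ n * ((s : ℝ) * (1 - r)⁻¹) := by
      rw [hKdef]
      ring
    rw [← hsplit, hKexp]
    exact add_le_add hwin_sum hrem
  -- final chain
  have hKnonneg : 0 ≤ K s := by
    rw [hKdef]
    have h1 : (0:ℝ) < 1 - a * b := by linarith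
    have h2 : (0:ℝ) < 1 - r := by linarith
    positivity
  have hθbound : (M : ℝ) * c₂ * K s < c₁ * (ξ n ω) ^ 2 := by
    have h := hbig
    rw [hθfdef] at h
    dsimp only at h
    rw [div_lt_iff₀ hc₁] at h
    calc (M : ℝ) * c₂ * K s = M * c₂ * K s := rfl
      _ < (ξ n ω) ^ 2 * c₁ := h
      _ = c₁ * (ξ n ω) ^ 2 := by ring
  have hterm : a ^ n * (c₁ * (n : ℝ) ^ (-α)) * (ξ n ω) ^ 2
      ≤ a ^ (2 * n) * ∑ k ∈ Icc 1 n, (a ^ k)⁻¹ * σ2 k * (ξ k ω) ^ 2 := by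
    have hmemn : n ∈ Icc 1 n := mem_Icc.2 ⟨hn1, le_refl n⟩
    have hnonneg : ∀ k ∈ Icc 1 n, 0 ≤ (a ^ k)⁻¹ * σ2 k * (ξ k ω) ^ 2 := by
      intro k hk
      have hk1 := (mem_Icc.1 hk).1
      exact mul_nonneg (mul_nonneg (inv_nonneg.2 (pow_nonneg ha.le k)) (hσpos k hk1).le)
        (sq_nonneg _)
    have h1 : (a ^ n)⁻¹ * σ2 n * (ξ n ω) ^ 2 ≤ ∑ k ∈ Icc 1 n, (a ^ k)⁻¹ * σ2 k * (ξ k ω) ^ 2 :=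
      Finset.single_le_sum hnonneg hmemn
    have h2 : a ^ (2 * n) * ((a ^ n)⁻¹ * σ2 n * (ξ n ω) ^ 2) = a ^ n * σ2 n * (ξ n ω) ^ 2 := by
      rw [two_mul, pow_add]
      field_simp
    calc a ^ n * (c₁ * (n : ℝ) ^ (-α)) * (ξ n ω) ^ 2
        ≤ a ^ n * σ2 n * (ξ n ω) ^ 2 := by
          refine mul_le_mul_of_nonneg_right ?_ (sq_nonneg _)
          exact mul_le_mul_of_nonneg_left (hσ n hn1).1 han.le
      _ = a ^ (2 * n) * ((a ^ n)⁻¹ * σ2 n * (ξ n ω) ^ 2) := h2.symm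
      _ ≤ a ^ (2 * n) * ∑ k ∈ Icc 1 n, (a ^ k)⁻¹ * σ2 k * (ξ k ω) ^ 2 :=
          mul_le_mul_of_nonneg_left h1 (pow_nonneg ha.le _)
  have hchain : C * ∑' k : ℕ, a ^ (n + 1 + k) * σ2 (n + 1 + k) * (ξ (n + 1 + k) ω) ^ 2
      ≤ (M : ℝ) * ((c₂ * (n : ℝ) ^ (-α)) * (a ^ n * K s)) := by
    have h1 : C * ∑' k : ℕ, a ^ (n + 1 + k) * σ2 (n + 1 + k) * (ξ (n + 1 + k) ω) ^ 2
        ≤ (M : ℝ) * ∑' k : ℕ, a ^ (n + 1 + k) * σ2 (n + 1 + k) * (ξ (n + 1 + k) ω) ^ 2 :=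
      mul_le_mul_of_nonneg_right hM (tsum_nonneg hu0)
    refine h1.trans (mul_le_mul_of_nonneg_left ?_ (Nat.cast_nonneg M))
    refine hT.trans ?_
    exact mul_le_mul_of_nonneg_left hwtsum (by positivity)
  have hstrict : (M : ℝ) * ((c₂ * (n : ℝ) ^ (-α)) * (a ^ n * K s))
      < a ^ (2 * n) * ∑ k ∈ Icc 1 n, (a ^ k)⁻¹ * σ2 k * (ξ k ω) ^ 2 := by
    calc (M : ℝ) * ((c₂ * (n : ℝ) ^ (-α)) * (a ^ n * K s))
        = (a ^ n * (n : ℝ) ^ (-α)) * ((M : ℝ) * c₂ * K s) := by ring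
      _ < (a ^ n * (n : ℝ) ^ (-α)) * (c₁ * (ξ n ω) ^ 2) :=
          mul_lt_mul_of_pos_left hθbound (mul_pos han hnα)
      _ = a ^ n * (c₁ * (n : ℝ) ^ (-α)) * (ξ n ω) ^ 2 := by ring
      _ ≤ _ := hterm
  exact lt_of_le_of_lt hchain hstrict
end

section
/- Let a ∈ (0,1) and let (ξ_k) be a sequence of independent random variables with sup_k E[ξ_k²] < ∞ and limsup_{k→∞} |ξ_k| = +∞ almost surely. Then with probability 1, sup_{n ≥ 1} [ a^{2n} ∑_{k=1}^n a^{−k} k^{−α} ξ_k² ] / [ ∑_{k=n+1}^∞ a^k k^{−α} ξ_k² ] = +∞, for any α > 1. -/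
open MeasureTheory ProbabilityTheory Finset Filter

lemma aux_sumv {a : ℝ} (ha : 0 < a) (x : ℕ → ℝ)
    (hsum : Summable (fun k => a ^ k * x k ^ 2)) (n : ℕ) :
    Summable (fun k : ℕ => a ^ (1 + k) * (x (n + 1 + k)) ^ 2) := by
  have hsum_shift : Summable (fun k => a ^ (n + 1 + k) * x (n + 1 + k) ^ 2) :=
    hsum.comp_injective (add_right_injective (n + 1))
  refine (hsum_shift.mul_left ((a ^ n)⁻¹)).congr fun k => ?_
  have han : (a:ℝ) ^ n ≠ 0 := pow_ne_zero _ ha.ne'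
  rw [show n + 1 + k = n + (1 + k) by omega, pow_add]
  field_simp

lemma aux_success (a : ℝ) (ha : 0 < a) (ha1 : a < 1) (α : ℝ) (hα : 1 < α)
    (x : ℕ → ℝ) (hsum : Summable (fun k => a ^ k * x k ^ 2))
    (C M : ℝ) (hC : 0 < C) (hM : 0 ≤ M)
    (n : ℕ) (hn : 1 ≤ n) (hξ : M < |x n|)
    (hV : ∑' k : ℕ, a ^ (1 + k) * (x (n + 1 + k)) ^ 2 < M ^ 2 / C) :
    C * ∑' k : ℕ, a ^ (n + 1 + k) * ((n + 1 + k : ℕ) : ℝ) ^ (-α) * (x (n + 1 + k)) ^ 2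
      < a ^ (2 * n) * ∑ k ∈ Icc 1 n, (a ^ k)⁻¹ * (k : ℝ) ^ (-α) * (x k) ^ 2 := by
  have hα0 : (0:ℝ) < α := lt_trans one_pos hα
  have hnpos : (0:ℝ) < (n:ℝ) := by exact_mod_cast hn
  have hna : (0:ℝ) < (n:ℝ) ^ (-α) := Real.rpow_pos_of_pos hnpos _
  have han : (a:ℝ) ^ n ≠ 0 := pow_ne_zero _ ha.ne'
  have hapow : ∀ k : ℕ, a ^ (n + 1 + k) = a ^ n * a ^ (1 + k) := by
    intro k; rw [add_assoc, pow_add]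
  have hsum_shift : Summable (fun k => a ^ (n + 1 + k) * x (n + 1 + k) ^ 2) :=
    hsum.comp_injective (add_right_injective (n + 1))
  have hsumv : Summable (fun k : ℕ => a ^ (1 + k) * (x (n + 1 + k)) ^ 2) := aux_sumv ha x hsum n
  have hsumT : Summable (fun k => a ^ (n + 1 + k) * ((n + 1 + k : ℕ) : ℝ) ^ (-α) * (x (n + 1 + k)) ^ 2) := by
    refine Summable.of_nonneg_of_le (fun k => by positivity) (fun k => ?_) hsum_shift
    have h1 : ((n + 1 + k : ℕ) : ℝ) ^ (-α) ≤ 1 :=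
      Real.rpow_le_one_of_one_le_of_nonpos (by exact_mod_cast Nat.le_add_right (n+1) k |>.trans' (Nat.one_le_iff_ne_zero.2 (by omega))) (by linarith)
    calc a ^ (n + 1 + k) * ((n + 1 + k : ℕ) : ℝ) ^ (-α) * (x (n + 1 + k)) ^ 2
        ≤ a ^ (n + 1 + k) * 1 * (x (n + 1 + k)) ^ 2 := by
          apply mul_le_mul_of_nonneg_right (mul_le_mul_of_nonneg_left h1 (by positivity)) (sq_nonneg _)
      _ = a ^ (n + 1 + k) * (x (n + 1 + k)) ^ 2 := by ring
  have hterm : ∀ k : ℕ, a ^ (n + 1 + k) * ((n + 1 + k : ℕ) : ℝ) ^ (-α) * (x (n + 1 + k)) ^ 2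
      ≤ (n:ℝ) ^ (-α) * a ^ n * (a ^ (1 + k) * (x (n + 1 + k)) ^ 2) := by
    intro k
    have hbase : (n:ℝ) ≤ ((n + 1 + k : ℕ) : ℝ) := by exact_mod_cast Nat.le_add_right n (1+k) |>.trans (by omega)
    have hmono : ((n + 1 + k : ℕ) : ℝ) ^ (-α) ≤ (n:ℝ) ^ (-α) := by
      rw [Real.rpow_neg (by positivity), Real.rpow_neg hnpos.le]
      exact inv_anti₀ (Real.rpow_pos_of_pos hnpos α) (Real.rpow_le_rpow hnpos.le hbase hα0.le)
    calc a ^ (n + 1 + k) * ((n + 1 + k : ℕ) : ℝ) ^ (-α) * (x (n + 1 + k)) ^ 2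
        ≤ a ^ (n + 1 + k) * (n:ℝ) ^ (-α) * (x (n + 1 + k)) ^ 2 := by
          apply mul_le_mul_of_nonneg_right (mul_le_mul_of_nonneg_left hmono (by positivity)) (sq_nonneg _)
      _ = (n:ℝ) ^ (-α) * a ^ n * (a ^ (1 + k) * (x (n + 1 + k)) ^ 2) := by rw [hapow]; ring
  have h1 : ∑' k : ℕ, a ^ (n + 1 + k) * ((n + 1 + k : ℕ) : ℝ) ^ (-α) * (x (n + 1 + k)) ^ 2
      ≤ (n:ℝ) ^ (-α) * a ^ n * ∑' k : ℕ, a ^ (1 + k) * (x (n + 1 + k)) ^ 2 := by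
    calc ∑' k : ℕ, a ^ (n + 1 + k) * ((n + 1 + k : ℕ) : ℝ) ^ (-α) * (x (n + 1 + k)) ^ 2
        ≤ ∑' k : ℕ, (n:ℝ) ^ (-α) * a ^ n * (a ^ (1 + k) * (x (n + 1 + k)) ^ 2) :=
          Summable.tsum_le_tsum hterm hsumT (hsumv.mul_left _)
      _ = (n:ℝ) ^ (-α) * a ^ n * ∑' k : ℕ, a ^ (1 + k) * (x (n + 1 + k)) ^ 2 := tsum_mul_left
  have hcpos : (0:ℝ) < (n:ℝ) ^ (-α) * a ^ n := by positivity
  have h2 : C * ∑' k : ℕ, a ^ (n + 1 + k) * ((n + 1 + k : ℕ) : ℝ) ^ (-α) * (x (n + 1 + k)) ^ 2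
      < a ^ n * ((n:ℝ) ^ (-α) * M ^ 2) := by
    have hb : C * ∑' k : ℕ, a ^ (n + 1 + k) * ((n + 1 + k : ℕ) : ℝ) ^ (-α) * (x (n + 1 + k)) ^ 2
        ≤ C * ((n:ℝ) ^ (-α) * a ^ n * ∑' k : ℕ, a ^ (1 + k) * (x (n + 1 + k)) ^ 2) :=
      mul_le_mul_of_nonneg_left h1 hC.le
    have hs : C * ((n:ℝ) ^ (-α) * a ^ n * ∑' k : ℕ, a ^ (1 + k) * (x (n + 1 + k)) ^ 2)
        < C * ((n:ℝ) ^ (-α) * a ^ n * (M ^ 2 / C)) :=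
      mul_lt_mul_of_pos_left (mul_lt_mul_of_pos_left hV hcpos) hC
    have he : C * ((n:ℝ) ^ (-α) * a ^ n * (M ^ 2 / C)) = a ^ n * ((n:ℝ) ^ (-α) * M ^ 2) := by
      field_simp
    linarith
  have hx2 : M ^ 2 < x n ^ 2 := by
    have := pow_lt_pow_left₀ hξ hM (n := 2) (by norm_num)
    rwa [sq_abs] at this
  have h3 : a ^ n * ((n:ℝ) ^ (-α) * M ^ 2) < a ^ n * ((n:ℝ) ^ (-α) * x n ^ 2) := by
    apply mul_lt_mul_of_pos_left _ (pow_pos ha n)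
    exact mul_lt_mul_of_pos_left hx2 hna
  have hsingle : (a ^ n)⁻¹ * (n:ℝ) ^ (-α) * x n ^ 2
      ≤ ∑ k ∈ Icc 1 n, (a ^ k)⁻¹ * (k : ℝ) ^ (-α) * (x k) ^ 2 := by
    apply Finset.single_le_sum (f := fun k : ℕ => (a ^ k)⁻¹ * (k : ℝ) ^ (-α) * (x k) ^ 2)
      (fun i hi => by positivity) (Finset.mem_Icc.2 ⟨hn, le_refl n⟩)
  have h4 : a ^ n * ((n:ℝ) ^ (-α) * x n ^ 2)
      ≤ a ^ (2 * n) * ∑ k ∈ Icc 1 n, (a ^ k)⁻¹ * (k : ℝ) ^ (-α) * (x k) ^ 2 := by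
    have := mul_le_mul_of_nonneg_left hsingle (pow_nonneg ha.le (2 * n))
    have he : a ^ (2 * n) * ((a ^ n)⁻¹ * (n:ℝ) ^ (-α) * x n ^ 2)
        = a ^ n * ((n:ℝ) ^ (-α) * x n ^ 2) := by
      rw [two_mul, pow_add]; field_simp
    linarith
  linarith

/-- Failure of the Muckenhoupt-type noise condition in the severely ill-posed case, under
independence, uniformly bounded second moments, and a.s. unboundedness of the noise. -/
theorem stmt_7
    {Ω : Type*} [MeasurableSpace Ω] {μ : Measure Ω} [IsProbabilityMeasure μ]
    (a : ℝ) (ha : 0 < a) (ha1 : a < 1)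
    (ξ : ℕ → Ω → ℝ)
    (hmeas : ∀ k, Measurable (ξ k))
    (hindep : iIndepFun ξ μ)
    (hL2 : ∀ k, MemLp (ξ k) 2 μ)
    (B : ℝ) (hB : ∀ k, μ[fun ω => (ξ k ω) ^ 2] ≤ B)
    (hunbdd : ∀ᵐ ω ∂μ, ∀ M : ℝ, ∃ᶠ k in atTop, M < |ξ k ω|) :
    ∀ α : ℝ, 1 < α →
      ∀ᵐ ω ∂μ, ∀ C : ℝ, ∃ n : ℕ, 1 ≤ n ∧
        C * ∑' k : ℕ, a ^ (n + 1 + k) * ((n + 1 + k : ℕ) : ℝ) ^ (-α) * (ξ (n + 1 + k) ω) ^ 2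
          < a ^ (2 * n) * ∑ k ∈ Icc 1 n, (a ^ k)⁻¹ * (k : ℝ) ^ (-α) * (ξ k ω) ^ 2 := by
  intro α hα
  classical
  have hB0 : 0 ≤ B := le_trans (integral_nonneg fun ω => sq_nonneg _) (hB 0)
  have hInt : ∀ k, Integrable (fun ω => (ξ k ω) ^ 2) μ := fun k => (hL2 k).integrable_sq
  have hlint : ∀ (c : ℝ), 0 ≤ c → ∀ k, ∫⁻ ω, ENNReal.ofReal (c * (ξ k ω) ^ 2) ∂μ
      ≤ ENNReal.ofReal (c * B) := by
    intro c hc k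
    calc ∫⁻ ω, ENNReal.ofReal (c * (ξ k ω) ^ 2) ∂μ
        = ∫⁻ ω, ENNReal.ofReal c * ENNReal.ofReal ((ξ k ω) ^ 2) ∂μ := by
          congr 1; funext ω; rw [ENNReal.ofReal_mul hc]
      _ = ENNReal.ofReal c * ∫⁻ ω, ENNReal.ofReal ((ξ k ω) ^ 2) ∂μ :=
          lintegral_const_mul _ ((hmeas k).pow_const 2).ennreal_ofReal
      _ ≤ ENNReal.ofReal c * ENNReal.ofReal B := by
          apply mul_le_mul_right
          rw [← ofReal_integral_eq_lintegral_ofReal (hInt k)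
            (Eventually.of_forall fun ω => sq_nonneg _)]
          exact ENNReal.ofReal_le_ofReal (hB k)
      _ = ENNReal.ofReal (c * B) := (ENNReal.ofReal_mul hc).symm
  -- a.e. summability
  have hUmeas : Measurable (fun ω => ∑' k, ENNReal.ofReal (a ^ k * (ξ k ω) ^ 2)) :=
    Measurable.ennreal_tsum fun k => (((hmeas k).pow_const 2).const_mul (a ^ k)).ennreal_ofReal
  have hSumm : ∀ᵐ ω ∂μ, Summable (fun k => a ^ k * (ξ k ω) ^ 2) := by
    have hUlt : ∀ᵐ ω ∂μ, (∑' k, ENNReal.ofReal (a ^ k * (ξ k ω) ^ 2)) < ⊤ := by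
      apply ae_lt_top hUmeas
      rw [lintegral_tsum fun k =>
        ((((hmeas k).pow_const 2).const_mul (a ^ k)).ennreal_ofReal).aemeasurable]
      have hb := fun k => hlint (a ^ k) (by positivity) k
      refine ne_top_of_le_ne_top (ENNReal.ofReal_ne_top (r := (∑' k : ℕ, a ^ k * B))) ?_
      calc ∑' k, ∫⁻ ω, ENNReal.ofReal (a ^ k * (ξ k ω) ^ 2) ∂μ
          ≤ ∑' k, ENNReal.ofReal (a ^ k * B) := ENNReal.tsum_le_tsum hb
        _ = ENNReal.ofReal (∑' k : ℕ, a ^ k * B) :=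
            (ENNReal.ofReal_tsum_of_nonneg (fun k => by positivity)
              ((summable_geometric_of_lt_one ha.le ha1).mul_right B)).symm
    filter_upwards [hUlt] with ω hω
    refine (ENNReal.summable_toReal hω.ne).congr fun k => ?_
    rw [ENNReal.toReal_ofReal (by positivity)]
  -- the V functions
  set Vf : ℕ → Ω → ENNReal :=
    fun n ω => ∑' k, ENNReal.ofReal (a ^ (1 + k) * (ξ (n + 1 + k) ω) ^ 2) with hVf
  have hVmeas_sup : ∀ n, Measurable[⨆ i ∈ (Set.Iic n)ᶜ, MeasurableSpace.comap (ξ i) inferInstance]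
      (Vf n) := by
    intro n
    refine Measurable.ennreal_tsum fun k => ?_
    have h1 : Measurable[MeasurableSpace.comap (ξ (n + 1 + k)) inferInstance] (ξ (n + 1 + k)) :=
      Measurable.of_comap_le le_rfl
    have h2 : MeasurableSpace.comap (ξ (n + 1 + k)) inferInstance
        ≤ ⨆ i ∈ (Set.Iic n)ᶜ, MeasurableSpace.comap (ξ i) inferInstance := by
      apply le_biSup (fun i => MeasurableSpace.comap (ξ i) inferInstance)
      simp only [Set.mem_compl_iff, Set.mem_Iic, not_le]
      omega
    exact (((measurable_id.pow_const 2).const_mul (a ^ (1 + k))).ennreal_ofReal).comp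
      (h1.mono h2 le_rfl)
  have hsup_le : ∀ n, (⨆ i ∈ (Set.Iic n)ᶜ, MeasurableSpace.comap (ξ i) inferInstance)
      ≤ (inferInstance : MeasurableSpace Ω) := fun n => iSup₂_le fun i _ => (hmeas i).comap_le
  have hVmeas : ∀ n, Measurable (Vf n) := fun n => (hVmeas_sup n).mono (hsup_le n) le_rfl
  set K : ℝ := a * (1 - a)⁻¹ * B with hK
  have hK0 : 0 ≤ K := by
    have : (0:ℝ) ≤ (1 - a)⁻¹ := inv_nonneg.2 (by linarith)
    positivity
  have hVlint : ∀ n, ∫⁻ ω, Vf n ω ∂μ ≤ ENNReal.ofReal K := by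
    intro n
    rw [hVf]
    rw [lintegral_tsum fun k =>
      ((((hmeas (n + 1 + k)).pow_const 2).const_mul (a ^ (1 + k))).ennreal_ofReal).aemeasurable]
    have hb := fun k => hlint (a ^ (1 + k)) (by positivity) (n + 1 + k)
    have hsummable : Summable (fun k : ℕ => a ^ (1 + k) * B) := by
      refine ((summable_geometric_of_lt_one ha.le ha1).mul_right B).mul_left a |>.congr fun k => ?_
      rw [pow_add, pow_one]; ring
    calc ∑' k, ∫⁻ ω, ENNReal.ofReal (a ^ (1 + k) * (ξ (n + 1 + k) ω) ^ 2) ∂μ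
        ≤ ∑' k, ENNReal.ofReal (a ^ (1 + k) * B) := ENNReal.tsum_le_tsum hb
      _ = ENNReal.ofReal (∑' k : ℕ, a ^ (1 + k) * B) :=
          (ENNReal.ofReal_tsum_of_nonneg (fun k => by positivity) hsummable).symm
      _ = ENNReal.ofReal K := by
          congr 1
          have : (fun k : ℕ => a ^ (1 + k) * B) = fun k : ℕ => a * (a ^ k * B) := by
            funext k; rw [pow_add, pow_one]; ring
          rw [this, tsum_mul_left, tsum_mul_right, tsum_geometric_of_lt_one ha.le ha1, hK]
          ring
  have hMarkov : ∀ n (t : ℝ), 0 < t →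
      μ {ω | ENNReal.ofReal t ≤ Vf n ω} ≤ ENNReal.ofReal K / ENNReal.ofReal t := by
    intro n t ht
    calc μ {ω | ENNReal.ofReal t ≤ Vf n ω}
        ≤ (∫⁻ ω, Vf n ω ∂μ) / ENNReal.ofReal t :=
          meas_ge_le_lintegral_div (hVmeas n).aemeasurable
            (ne_of_gt (ENNReal.ofReal_pos.2 ht)) ENNReal.ofReal_ne_top
      _ ≤ _ := ENNReal.div_le_div_right (hVlint n) _
  -- key measure estimate
  have key : ∀ m j : ℕ,
      μ {ω | (∀ M : ℝ, ∃ᶠ k in atTop, M < |ξ k ω|) ∧ Summable (fun k => a ^ k * (ξ k ω) ^ 2) ∧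
          ¬ ∃ n : ℕ, 1 ≤ n ∧
            ((m:ℝ)+1) * ∑' k : ℕ, a ^ (n + 1 + k) * ((n + 1 + k : ℕ) : ℝ) ^ (-α) * (ξ (n + 1 + k) ω) ^ 2
              < a ^ (2 * n) * ∑ k ∈ Icc 1 n, (a ^ k)⁻¹ * (k : ℝ) ^ (-α) * (ξ k ω) ^ 2}
        ≤ ENNReal.ofReal K / ENNReal.ofReal ((((j:ℝ)+1) ^ 2) / ((m:ℝ)+1)) := by
    intro m j
    set M : ℝ := (j:ℝ) + 1 with hMdef
    set C : ℝ := (m:ℝ) + 1 with hCdef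
    have hM : 0 < M := by positivity
    have hC : 0 < C := by positivity
    set t : ℝ := M ^ 2 / C with htdef
    have ht : 0 < t := by positivity
    set E : ℕ → Set Ω := fun n => {ω | M < |ξ n ω|} ∩ ⋂ i ∈ Set.Ico 1 n, {ω | |ξ i ω| ≤ M}
      with hEdef
    set F : ℕ → Set Ω := fun n => {ω | ENNReal.ofReal t ≤ Vf n ω} with hFdef
    have hEmeas : ∀ n, MeasurableSet (E n) := by
      intro n
      refine (measurableSet_lt measurable_const (hmeas n).abs).inter ?_
      exact MeasurableSet.biInter (Set.to_countable _)
        fun i _ => measurableSet_le (hmeas i).abs measurable_const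
    -- subset claim
    have hsub : {ω | (∀ M : ℝ, ∃ᶠ k in atTop, M < |ξ k ω|) ∧ Summable (fun k => a ^ k * (ξ k ω) ^ 2) ∧
          ¬ ∃ n : ℕ, 1 ≤ n ∧
            ((m:ℝ)+1) * ∑' k : ℕ, a ^ (n + 1 + k) * ((n + 1 + k : ℕ) : ℝ) ^ (-α) * (ξ (n + 1 + k) ω) ^ 2
              < a ^ (2 * n) * ∑ k ∈ Icc 1 n, (a ^ k)⁻¹ * (k : ℝ) ^ (-α) * (ξ k ω) ^ 2}
        ⊆ ⋃ n : ℕ, (E (n + 1) ∩ F (n + 1)) := by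
      rintro ω ⟨hub, hsm, hnp⟩
      by_contra hnotin
      simp only [Set.mem_iUnion, not_exists] at hnotin
      have hex : ∃ n : ℕ, 1 ≤ n ∧ M < |ξ n ω| := by
        obtain ⟨b, hb1, hb2⟩ := (frequently_atTop.1 (hub M)) 1
        exact ⟨b, hb1, hb2⟩
      obtain ⟨hn01, hn0ξ⟩ := Nat.find_spec hex
      set n₀ := Nat.find hex with hn₀
      have hmin : ∀ i, 1 ≤ i → i < n₀ → |ξ i ω| ≤ M := by
        intro i hi1 hi2
        have := Nat.find_min hex hi2
        push_neg at this
        exact this hi1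
      have hE : ω ∈ E n₀ := by
        refine ⟨hn0ξ, ?_⟩
        simp only [Set.mem_iInter, Set.mem_setOf_eq]
        intro i hi
        exact hmin i hi.1 hi.2
      obtain ⟨n', hn'⟩ : ∃ n', n₀ = n' + 1 := ⟨n₀ - 1, by omega⟩
      have hFn : ω ∉ F n₀ := by
        intro hf
        exact hnotin n' ⟨hn' ▸ hE, hn' ▸ hf⟩
      have hVlt : Vf n₀ ω < ENNReal.ofReal t := by
        simpa [hFdef, not_le] using hFn
      have hsv : Summable (fun k : ℕ => a ^ (1 + k) * (ξ (n₀ + 1 + k) ω) ^ 2) :=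
        aux_sumv ha (fun k => ξ k ω) hsm n₀
      have hv : ∑' k : ℕ, a ^ (1 + k) * (ξ (n₀ + 1 + k) ω) ^ 2 < t := by
        have heq : ENNReal.ofReal (∑' k : ℕ, a ^ (1 + k) * (ξ (n₀ + 1 + k) ω) ^ 2) = Vf n₀ ω :=
          ENNReal.ofReal_tsum_of_nonneg (fun k => by positivity) hsv
        rw [← heq] at hVlt
        exact (ENNReal.ofReal_lt_ofReal_iff ht).1 hVlt
      exact hnp ⟨n₀, hn01,
        aux_success a ha ha1 α hα (fun k => ξ k ω) hsm C M hC hM.le n₀ hn01 hn0ξ hv⟩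
    -- independence
    have hindep2 : ∀ n : ℕ, μ (E (n + 1) ∩ F (n + 1)) = μ (E (n + 1)) * μ (F (n + 1)) := by
      intro n
      have hInd := indep_biSup_compl (fun i => (hmeas i).comap_le) hindep.iIndep (Set.Iic (n + 1))
      refine (Indep_iff _ _ _).1 hInd _ _ ?_ ?_
      · refine MeasurableSet.inter ?_ ?_
        · exact le_biSup (fun i => MeasurableSpace.comap (ξ i) inferInstance)
            (Set.mem_Iic.2 (le_refl (n + 1))) _
            ⟨{x | M < |x|}, measurableSet_lt measurable_const measurable_abs, rfl⟩
        · refine MeasurableSet.biInter (Set.to_countable _) fun i hi => ?_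
          exact le_biSup (fun i => MeasurableSpace.comap (ξ i) inferInstance)
            (Set.mem_Iic.2 (le_of_lt hi.2)) _
            ⟨{x | |x| ≤ M}, measurableSet_le measurable_abs measurable_const, rfl⟩
      · exact (hVmeas_sup (n + 1)) measurableSet_Ici
    -- disjointness
    have hdisj : Pairwise (Function.onFun Disjoint fun n => E (n + 1)) := by
      have hgen : ∀ p q : ℕ, p < q → Disjoint (E (p + 1)) (E (q + 1)) := by
        intro p q hpq
        rw [Set.disjoint_left]
        rintro ω ⟨hω1, _⟩ ⟨_, hω2⟩
        have hle : |ξ (p + 1) ω| ≤ M :=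
          Set.mem_iInter₂.1 hω2 (p + 1) ⟨by omega, by omega⟩
        exact absurd hω1 (not_lt.2 hle)
      intro p q hpq
      rcases lt_or_gt_of_ne hpq with h | h
      · exact hgen p q h
      · exact (hgen q p h).symm
    have hsum1 : (∑' n : ℕ, μ (E (n + 1))) ≤ 1 := by
      rw [← measure_iUnion hdisj fun n => hEmeas (n + 1)]
      exact prob_le_one
    calc μ _ ≤ μ (⋃ n : ℕ, (E (n + 1) ∩ F (n + 1))) := measure_mono hsub
      _ ≤ ∑' n : ℕ, μ (E (n + 1) ∩ F (n + 1)) := measure_iUnion_le _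
      _ = ∑' n : ℕ, μ (E (n + 1)) * μ (F (n + 1)) := tsum_congr hindep2
      _ ≤ ∑' n : ℕ, μ (E (n + 1)) * (ENNReal.ofReal K / ENNReal.ofReal t) :=
          ENNReal.tsum_le_tsum fun n => mul_le_mul_right (hMarkov (n + 1) t ht) _
      _ = (∑' n : ℕ, μ (E (n + 1))) * (ENNReal.ofReal K / ENNReal.ofReal t) :=
          ENNReal.tsum_mul_right
      _ ≤ 1 * (ENNReal.ofReal K / ENNReal.ofReal t) := mul_le_mul_left hsum1 _
      _ = ENNReal.ofReal K / ENNReal.ofReal t := one_mul _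
  -- conclude nullity
  have key2 : ∀ m : ℕ,
      μ {ω | (∀ M : ℝ, ∃ᶠ k in atTop, M < |ξ k ω|) ∧ Summable (fun k => a ^ k * (ξ k ω) ^ 2) ∧
          ¬ ∃ n : ℕ, 1 ≤ n ∧
            ((m:ℝ)+1) * ∑' k : ℕ, a ^ (n + 1 + k) * ((n + 1 + k : ℕ) : ℝ) ^ (-α) * (ξ (n + 1 + k) ω) ^ 2
              < a ^ (2 * n) * ∑ k ∈ Icc 1 n, (a ^ k)⁻¹ * (k : ℝ) ^ (-α) * (ξ k ω) ^ 2} = 0 := by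
    intro m
    have hb : ∀ j : ℕ,
        μ {ω | (∀ M : ℝ, ∃ᶠ k in atTop, M < |ξ k ω|) ∧ Summable (fun k => a ^ k * (ξ k ω) ^ 2) ∧
          ¬ ∃ n : ℕ, 1 ≤ n ∧
            ((m:ℝ)+1) * ∑' k : ℕ, a ^ (n + 1 + k) * ((n + 1 + k : ℕ) : ℝ) ^ (-α) * (ξ (n + 1 + k) ω) ^ 2
              < a ^ (2 * n) * ∑ k ∈ Icc 1 n, (a ^ k)⁻¹ * (k : ℝ) ^ (-α) * (ξ k ω) ^ 2}
          ≤ ENNReal.ofReal (K * ((m:ℝ)+1) / ((j:ℝ)+1)) := by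
      intro j
      refine (key m j).trans ?_
      rw [← ENNReal.ofReal_div_of_pos (by positivity)]
      apply ENNReal.ofReal_le_ofReal
      rw [div_div_eq_mul_div]
      apply div_le_div_of_nonneg_left ?_ (by positivity) ?_
      · positivity
      · nlinarith [sq_nonneg ((j:ℝ))]
    have hlim : Tendsto (fun j : ℕ => ENNReal.ofReal (K * ((m:ℝ)+1) / ((j:ℝ)+1))) atTop (nhds 0) := by
      rw [← ENNReal.ofReal_zero]
      apply ENNReal.tendsto_ofReal
      have h0 : Tendsto (fun n : ℕ => (K * ((m:ℝ)+1)) / (n:ℝ)) atTop (nhds 0) :=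
        tendsto_const_div_atTop_nhds_zero_nat _
      have := h0.comp (tendsto_add_atTop_nat 1)
      refine this.congr fun j => ?_
      simp only [Function.comp_apply]
      push_cast
      ring_nf
    exact le_antisymm (ge_of_tendsto' hlim hb) zero_le
  have hae : ∀ m : ℕ, ∀ᵐ ω ∂μ,
      (∀ M : ℝ, ∃ᶠ k in atTop, M < |ξ k ω|) → (Summable (fun k => a ^ k * (ξ k ω) ^ 2)) →
        ∃ n : ℕ, 1 ≤ n ∧
          ((m:ℝ)+1) * ∑' k : ℕ, a ^ (n + 1 + k) * ((n + 1 + k : ℕ) : ℝ) ^ (-α) * (ξ (n + 1 + k) ω) ^ 2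
            < a ^ (2 * n) * ∑ k ∈ Icc 1 n, (a ^ k)⁻¹ * (k : ℝ) ^ (-α) * (ξ k ω) ^ 2 := by
    intro m
    rw [ae_iff]
    rw [show {ω | ¬ ((∀ M : ℝ, ∃ᶠ k in atTop, M < |ξ k ω|) →
        (Summable (fun k => a ^ k * (ξ k ω) ^ 2)) →
        ∃ n : ℕ, 1 ≤ n ∧
          ((m:ℝ)+1) * ∑' k : ℕ, a ^ (n + 1 + k) * ((n + 1 + k : ℕ) : ℝ) ^ (-α) * (ξ (n + 1 + k) ω) ^ 2
            < a ^ (2 * n) * ∑ k ∈ Icc 1 n, (a ^ k)⁻¹ * (k : ℝ) ^ (-α) * (ξ k ω) ^ 2)}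
      = {ω | (∀ M : ℝ, ∃ᶠ k in atTop, M < |ξ k ω|) ∧ Summable (fun k => a ^ k * (ξ k ω) ^ 2) ∧
          ¬ ∃ n : ℕ, 1 ≤ n ∧
            ((m:ℝ)+1) * ∑' k : ℕ, a ^ (n + 1 + k) * ((n + 1 + k : ℕ) : ℝ) ^ (-α) * (ξ (n + 1 + k) ω) ^ 2
              < a ^ (2 * n) * ∑ k ∈ Icc 1 n, (a ^ k)⁻¹ * (k : ℝ) ^ (-α) * (ξ k ω) ^ 2} from by
      ext ω; simp only [Set.mem_setOf_eq, Classical.not_imp]]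
    exact key2 m
  filter_upwards [hunbdd, hSumm, ae_all_iff.2 hae] with ω h1 h2 h3
  intro C
  obtain ⟨m, hm⟩ := exists_nat_ge C
  obtain ⟨n, hn1, hn2⟩ := h3 m h1 h2
  refine ⟨n, hn1, lt_of_le_of_lt ?_ hn2⟩
  apply mul_le_mul_of_nonneg_right (le_trans hm (by linarith))
    (tsum_nonneg fun k => by positivity)
end

section
/- Let T : X → Y be a bounded linear operator between Hilbert spaces, g_α(λ) a Borel measurable filter function with 0 ≤ λ g_α(λ) ≤ 1 for all λ > 0, and define x_α = g_α(T*T) T* y for y = T x, x ∈ X. Then ψ(α, y) := ‖(I − T*T g_α(T*T)) x_α‖ ≤ ‖x_α − x‖. -/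
set_option maxHeartbeats 1000000


open ContinuousLinearMap

/-- Lemma 3.2, first inequality: for a filter function with `0 ≤ λ g(λ) ≤ 1`,
`ψ(α,y) = ‖(I - T*T g(T*T)) x_α‖ ≤ ‖x_α - x‖`, where `x_α = g(T*T) T* (T x)`. -/
theorem stmt_11
    {X Y : Type*}
    [NormedAddCommGroup X] [InnerProductSpace ℂ X] [CompleteSpace X]
    [NormedAddCommGroup Y] [InnerProductSpace ℂ Y] [CompleteSpace Y]
    (T : X →L[ℂ] Y) (g : ℝ → ℝ) (hg : Continuous g)
    (hg01 : ∀ l : ℝ, 0 < l → 0 ≤ l * g l ∧ l * g l ≤ 1)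
    (x : X) :
    letI A : X →L[ℂ] X := (ContinuousLinearMap.adjoint T).comp T
    letI xα : X := cfc g A ((ContinuousLinearMap.adjoint T) (T x))
    ‖xα - A (cfc g A xα)‖ ≤ ‖xα - x‖ := by
  set A : X →L[ℂ] X := (ContinuousLinearMap.adjoint T).comp T with hAdef
  set xα : X := cfc g A ((ContinuousLinearMap.adjoint T) (T x)) with hxαdef
  have hA : A.IsPositive := by
    constructor
    · rw [← ContinuousLinearMap.isSelfAdjoint_iff_isSymmetric, ContinuousLinearMap.isSelfAdjoint_iff', hAdef, ContinuousLinearMap.adjoint_comp,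
        ContinuousLinearMap.adjoint_adjoint]
    · intro z
      rw [ContinuousLinearMap.reApplyInnerSelf, hAdef, ContinuousLinearMap.comp_apply,
        ContinuousLinearMap.adjoint_inner_left]
      exact inner_self_nonneg (𝕜 := ℂ)
  have hAsa : IsSelfAdjoint A := hA.isSelfAdjoint
  have hAnn : (0 : X →L[ℂ] X) ≤ A := (ContinuousLinearMap.nonneg_iff_isPositive A).mpr hA
  set f : ℝ → ℝ := fun l => l * g l with hf
  have hfc : Continuous f := continuous_id.mul hg
  set B : X →L[ℂ] X := cfc g A with hB
  set D : X →L[ℂ] X := cfc f A with hD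
  have hDAB : D = A * B := by
    rw [hD, hB, hf]
    calc cfc (fun l => l * g l) A = cfc id A * cfc g A := by
          rw [← cfc_mul (id : ℝ → ℝ) g A]; rfl
      _ = A * cfc g A := by rw [cfc_id ℝ A]
  have hDBA : D = B * A := by
    rw [hD, hB, hf]
    calc cfc (fun l => l * g l) A = cfc (fun l => g l * l) A := by
          simp [mul_comm]
      _ = cfc g A * cfc id A := by rw [← cfc_mul g (id : ℝ → ℝ) A]; rfl
      _ = cfc g A * A := by rw [cfc_id ℝ A]
  have hxα : xα = D x := by
    have : xα = B (A x) := rfl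
    rw [this, hDBA]; rfl
  have hgoal : xα - A (B xα) = D (x - xα) := by
    have h1 : A (B xα) = D xα := by rw [hDAB]; rfl
    rw [h1, hxα, map_sub]
  have hnormD : ‖D‖ ≤ 1 := by
    refine norm_cfc_le zero_le_one fun l hl => ?_
    have hl0 : 0 ≤ l := spectrum_nonneg_of_nonneg hAnn hl
    rcases hl0.eq_or_lt with h | h
    · simp [hf, ← h]
    · have := hg01 l h
      rw [Real.norm_eq_abs, abs_of_nonneg this.1]
      exact this.2
  calc ‖xα - A (B xα)‖ = ‖D (x - xα)‖ := by rw [hgoal]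
    _ ≤ ‖D‖ * ‖x - xα‖ := D.le_opNorm _
    _ ≤ 1 * ‖x - xα‖ := by
        exact mul_le_mul_of_nonneg_right hnormD (norm_nonneg _)
    _ = ‖xα - x‖ := by rw [one_mul, norm_sub_rev]
end

section
/- Let T be a compact operator with singular values λ_k > 0, κ nondecreasing positive, and suppose the noise coefficients e_k = ⟨y^δ − y, u_k⟩² satisfy: for all α > 0, α² ∑_{λ_k² > α} λ_k^{−2} κ(λ_k²)² e_k ≤ C ∑_{λ_k² ≤ α} λ_k² κ(λ_k²)² e_k. Let g_α be Tikhonov's filter g_α(λ) = 1/(α+λ). Then there is a constant K (depending only on C) such that for all α > 0: ∑_k κ(λ_k²)² λ_k² g_α(λ_k²)² e_k ≤ K α^{−2} ∑_{λ_k² ≤ α} κ(λ_k²)² λ_k² e_k. -/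
/-- Discrete version of Lemma 3.5 for the Tikhonov filter `g_α(λ) = 1/(α+λ)`:
under the κ-weighted Muckenhoupt-type noise condition, the weighted propagated noise
is bounded by the low-frequency part. -/
theorem stmt_14
    (lam : ℕ → ℝ) (hlam_pos : ∀ k, 0 < lam k)
    (κ : ℝ → ℝ) (hκ_pos : ∀ t > 0, 0 < κ t) (hκ_mono : MonotoneOn κ (Set.Ioi 0))
    (e : ℕ → ℝ) (he : ∀ k, 0 ≤ e k)
    (hsum : Summable (fun k => κ ((lam k) ^ 2) ^ 2 * (lam k) ^ 2 * e k))
    (hsum' : Summable (fun k => ((lam k) ^ 2)⁻¹ * κ ((lam k) ^ 2) ^ 2 * e k))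
    (C : ℝ) (hC : 0 < C)
    (hnoise : ∀ α : ℝ, 0 < α →
      α ^ 2 * ∑' k : ℕ, (if α < (lam k) ^ 2 then ((lam k) ^ 2)⁻¹ * κ ((lam k) ^ 2) ^ 2 * e k else 0)
        ≤ C * ∑' k : ℕ, (if (lam k) ^ 2 ≤ α then (lam k) ^ 2 * κ ((lam k) ^ 2) ^ 2 * e k else 0)) :
    ∃ K > 0, ∀ α : ℝ, 0 < α →
      ∑' k : ℕ, κ ((lam k) ^ 2) ^ 2 * (lam k) ^ 2 * ((α + (lam k) ^ 2)⁻¹) ^ 2 * e k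
        ≤ K * (α ^ 2)⁻¹ *
          ∑' k : ℕ, (if (lam k) ^ 2 ≤ α then κ ((lam k) ^ 2) ^ 2 * (lam k) ^ 2 * e k else 0) := by
  refine ⟨1 + C, by linarith, fun α hα => ?_⟩
  have hlsq : ∀ k, 0 < (lam k) ^ 2 := fun k => pow_pos (hlam_pos k) 2
  have hκk : ∀ k, 0 < κ ((lam k) ^ 2) := fun k => hκ_pos _ (hlsq k)
  set f : ℕ → ℝ := fun k =>
    κ ((lam k) ^ 2) ^ 2 * (lam k) ^ 2 * ((α + (lam k) ^ 2)⁻¹) ^ 2 * e k with hf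
  set g1 : ℕ → ℝ := fun k =>
    if (lam k) ^ 2 ≤ α then (α ^ 2)⁻¹ * (κ ((lam k) ^ 2) ^ 2 * (lam k) ^ 2 * e k) else 0 with hg1
  set g2 : ℕ → ℝ := fun k =>
    if α < (lam k) ^ 2 then ((lam k) ^ 2)⁻¹ * κ ((lam k) ^ 2) ^ 2 * e k else 0 with hg2
  have hfle : ∀ k, f k ≤ g1 k + g2 k := by
    intro k
    have hden : 0 < α + (lam k) ^ 2 := by linarith [hlsq k]
    by_cases h : (lam k) ^ 2 ≤ α
    · simp only [hf, hg1, hg2, if_pos h, if_neg (not_lt.mpr h), add_zero]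
      have hle : ((α + (lam k) ^ 2)⁻¹) ^ 2 ≤ (α ^ 2)⁻¹ := by
        rw [← inv_pow]
        apply pow_le_pow_left₀ (by positivity)
        exact inv_anti₀ hα (by linarith [hlsq k])
      calc κ ((lam k) ^ 2) ^ 2 * (lam k) ^ 2 * ((α + (lam k) ^ 2)⁻¹) ^ 2 * e k
          ≤ κ ((lam k) ^ 2) ^ 2 * (lam k) ^ 2 * (α ^ 2)⁻¹ * e k := by
            apply mul_le_mul_of_nonneg_right _ (he k)
            apply mul_le_mul_of_nonneg_left hle (by positivity)
        _ = (α ^ 2)⁻¹ * (κ ((lam k) ^ 2) ^ 2 * (lam k) ^ 2 * e k) := by ring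
    · push_neg at h
      simp only [hf, hg1, hg2, if_neg (not_le.mpr h), if_pos h, zero_add]
      have hle : ((α + (lam k) ^ 2)⁻¹) ^ 2 ≤ (((lam k) ^ 2) ^ 2)⁻¹ := by
        rw [← inv_pow]
        apply pow_le_pow_left₀ (by positivity)
        exact inv_anti₀ (hlsq k) (by linarith)
      calc κ ((lam k) ^ 2) ^ 2 * (lam k) ^ 2 * ((α + (lam k) ^ 2)⁻¹) ^ 2 * e k
          ≤ κ ((lam k) ^ 2) ^ 2 * (lam k) ^ 2 * (((lam k) ^ 2) ^ 2)⁻¹ * e k := by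
            apply mul_le_mul_of_nonneg_right _ (he k)
            apply mul_le_mul_of_nonneg_left hle (by positivity)
        _ = ((lam k) ^ 2)⁻¹ * κ ((lam k) ^ 2) ^ 2 * e k := by
            have h0 : lam k ≠ 0 := (hlam_pos k).ne'
            field_simp
  have hg1nn : ∀ k, 0 ≤ g1 k := fun k => by
    simp only [hg1]; split
    · exact mul_nonneg (by positivity) (mul_nonneg (by positivity) (he k))
    · exact le_rfl
  have hg2nn : ∀ k, 0 ≤ g2 k := fun k => by
    simp only [hg2]; split
    · exact mul_nonneg (by positivity) (he k)
    · exact le_rfl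
  have hfnn : ∀ k, 0 ≤ f k := fun k => by
    simp only [hf]; exact mul_nonneg (by positivity) (he k)
  have hsg1 : Summable g1 := by
    apply Summable.of_nonneg_of_le hg1nn _ (hsum.mul_left (α ^ 2)⁻¹)
    intro k
    simp only [hg1]; split
    · exact le_rfl
    · exact mul_nonneg (by positivity) (mul_nonneg (by positivity) (he k))
  have hsg2 : Summable g2 := by
    apply Summable.of_nonneg_of_le hg2nn _ hsum'
    intro k
    simp only [hg2]; split
    · exact le_rfl
    · exact mul_nonneg (by positivity) (he k)
  have hsf : Summable f :=
    Summable.of_nonneg_of_le hfnn hfle (hsg1.add hsg2)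
  have h1 : ∑' k, f k ≤ ∑' k, (g1 k + g2 k) :=
    Summable.tsum_le_tsum hfle hsf (hsg1.add hsg2)
  rw [Summable.tsum_add hsg1 hsg2] at h1
  set S := ∑' k : ℕ, (if (lam k) ^ 2 ≤ α then κ ((lam k) ^ 2) ^ 2 * (lam k) ^ 2 * e k else 0)
    with hS
  have hSnn : 0 ≤ S := by
    apply tsum_nonneg
    intro k; split
    · exact mul_nonneg (by positivity) (he k)
    · exact le_rfl
  have hSeq : (∑' k : ℕ, (if (lam k) ^ 2 ≤ α then (lam k) ^ 2 * κ ((lam k) ^ 2) ^ 2 * e k else 0))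
      = S := by
    rw [hS]
    apply tsum_congr
    intro k
    split
    · ring
    · rfl
  have hg1sum : ∑' k, g1 k = (α ^ 2)⁻¹ * S := by
    rw [hS, ← tsum_mul_left]
    apply tsum_congr
    intro k
    simp only [hg1]
    split
    · rfl
    · simp
  have hg2sum : ∑' k, g2 k ≤ C * (α ^ 2)⁻¹ * S := by
    have := hnoise α hα
    rw [hSeq] at this
    have hα2 : (0:ℝ) < α ^ 2 := by positivity
    rw [← hg2] at this
    calc ∑' k, g2 k = (α ^ 2)⁻¹ * (α ^ 2 * ∑' k, g2 k) := by
          field_simp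
      _ ≤ (α ^ 2)⁻¹ * (C * S) := by
          apply mul_le_mul_of_nonneg_left this (by positivity)
      _ = C * (α ^ 2)⁻¹ * S := by ring
  calc ∑' k, f k ≤ ∑' k, g1 k + ∑' k, g2 k := h1
    _ ≤ (α ^ 2)⁻¹ * S + C * (α ^ 2)⁻¹ * S := by
        rw [hg1sum]; linarith
    _ = (1 + C) * (α ^ 2)⁻¹ * S := by ring
end
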